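/- arXiv:math/9905096 — 3 statements merged into one kernel-verified Lean document; each statement's English description precedes it below -/
import Mathlib

section
/- Let (g,R,P,S) be an admissible quadruple for the differential problem in ℝⁿ on [a,b]. Then for every t₀ ∈ [a,b], the set {J'(t₀) : J is a (P,S)-solution with J(t₀) = 0} equals the g-orthogonal complement of 𝕁[t₀] = {J(t₀) : J ∈ 𝕁} in ℝⁿ, i.e. it equals {x ∈ ℝⁿ : g(x, w) = 0 for all w ∈ 𝕁[t₀]}. -/
open Set
open scoped NNReal

/-- The `g`-orthogonal complement of `P` in `ℝⁿ`. -/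
def gOrtho {n : ℕ} (g : (Fin n → ℝ) →ₗ[ℝ] (Fin n → ℝ) →ₗ[ℝ] ℝ)
    (P : Submodule ℝ (Fin n → ℝ)) : Set (Fin n → ℝ) :=
  {x | ∀ p ∈ P, g x p = 0}

/-- A `(P,S)`-solution: a `C²` map `J : [a,b] → ℝⁿ` with `J'' = R(t) J` on `[a,b]`,
`J(a) ∈ P` and `J'(a) + S[J(a)] ∈ P^⊥`. -/
def IsPSSolution {n : ℕ} (g : (Fin n → ℝ) →ₗ[ℝ] (Fin n → ℝ) →ₗ[ℝ] ℝ)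
    (R : ℝ → (Fin n → ℝ) →L[ℝ] (Fin n → ℝ))
    (P : Submodule ℝ (Fin n → ℝ)) (S : (Fin n → ℝ) →ₗ[ℝ] (Fin n → ℝ))
    (a b : ℝ) (J : ℝ → Fin n → ℝ) : Prop :=
  ContDiffOn ℝ 2 J (Icc a b) ∧
  (∀ t ∈ Icc a b, derivWithin (derivWithin J (Icc a b)) (Icc a b) t = R t (J t)) ∧
  J a ∈ P ∧ (derivWithin J (Icc a b) a + S (J a)) ∈ gOrtho g P

/-- `t` is a `(P,S)`-focal instant: some nonzero `(P,S)`-solution vanishes at `t`. -/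
def IsFocal {n : ℕ} (g : (Fin n → ℝ) →ₗ[ℝ] (Fin n → ℝ) →ₗ[ℝ] ℝ)
    (R : ℝ → (Fin n → ℝ) →L[ℝ] (Fin n → ℝ))
    (P : Submodule ℝ (Fin n → ℝ)) (S : (Fin n → ℝ) →ₗ[ℝ] (Fin n → ℝ))
    (a b : ℝ) (t : ℝ) : Prop :=
  ∃ J : ℝ → Fin n → ℝ, IsPSSolution g R P S a b J ∧ (∃ s ∈ Icc a b, J s ≠ 0) ∧ J t = 0

/-- `𝕁[t] = {J(t) : J a (P,S)-solution}`. -/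
def solSpace {n : ℕ} (g : (Fin n → ℝ) →ₗ[ℝ] (Fin n → ℝ) →ₗ[ℝ] ℝ)
    (R : ℝ → (Fin n → ℝ) →L[ℝ] (Fin n → ℝ))
    (P : Submodule ℝ (Fin n → ℝ)) (S : (Fin n → ℝ) →ₗ[ℝ] (Fin n → ℝ))
    (a b : ℝ) (t : ℝ) : Set (Fin n → ℝ) :=
  {v | ∃ J : ℝ → Fin n → ℝ, IsPSSolution g R P S a b J ∧ J t = v}

noncomputable section JacobiAux

namespace JacobiAux

variable {n : ℕ}

abbrev EE (n : ℕ) := (Fin n → ℝ) × (Fin n → ℝ)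

def clamp (a b t : ℝ) : ℝ := max a (min t b)

lemma clamp_mem {a b : ℝ} (hab : a ≤ b) (t : ℝ) : clamp a b t ∈ Icc a b :=
  ⟨le_max_left _ _, max_le hab (min_le_right _ _)⟩

lemma clamp_eq {a b t : ℝ} (ht : t ∈ Icc a b) : clamp a b t = t := by
  unfold clamp; rw [min_eq_left ht.2, max_eq_right ht.1]

variable (R : ℝ → (Fin n → ℝ) →L[ℝ] (Fin n → ℝ)) (a b : ℝ)

def vf (t : ℝ) (u : EE n) : EE n := (u.2, R (clamp a b t) u.1)

lemma vf_add (t : ℝ) (u w : EE n) : vf R a b t (u + w) = vf R a b t u + vf R a b t w := by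
  simp [vf, Prod.ext_iff]

lemma vf_smul (t : ℝ) (c : ℝ) (u : EE n) : vf R a b t (c • u) = c • vf R a b t u := by
  simp [vf, Prod.ext_iff]

lemma vf_zero (t : ℝ) : vf R a b t 0 = 0 := by simp [vf, Prod.ext_iff]

lemma cont_Rclamp (hR : ContinuousOn R (Icc a b)) (hab : a ≤ b) :
    Continuous fun t => R (clamp a b t) := by
  apply hR.comp_continuous
  · exact continuous_const.max (continuous_id.min continuous_const)
  · exact fun t => clamp_mem hab t

lemma exists_lip (hR : ContinuousOn R (Icc a b)) (hab : a ≤ b) :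
    ∃ L : ℝ≥0, 1 ≤ (L : ℝ) ∧ (∀ t, LipschitzWith L (vf R a b t)) ∧
      (∀ t u, ‖vf R a b t u‖ ≤ (L : ℝ) * ‖u‖) := by
  obtain ⟨K, hK⟩ := isCompact_Icc.exists_bound_of_continuousOn hR
  have hL : (Real.toNNReal (max 1 K) : ℝ) = max 1 K :=
    Real.coe_toNNReal _ (le_trans zero_le_one (le_max_left 1 K))
  have key : ∀ t u, ‖vf R a b t u‖ ≤ (max 1 K) * ‖u‖ := by
    intro t u
    have h1 : ‖u.2‖ ≤ ‖u‖ := norm_snd_le u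
    have h2 : ‖R (clamp a b t) u.1‖ ≤ K * ‖u‖ := by
      calc ‖R (clamp a b t) u.1‖ ≤ ‖R (clamp a b t)‖ * ‖u.1‖ :=
            (R (clamp a b t)).le_opNorm u.1
        _ ≤ K * ‖u‖ := by
            have h3 := hK (clamp a b t) (clamp_mem hab t)
            exact mul_le_mul h3 (norm_fst_le u) (norm_nonneg _)
              (le_trans (norm_nonneg _) h3)
    rw [Prod.norm_def]
    apply max_le
    · calc ‖u.2‖ ≤ 1 * ‖u‖ := by simpa using h1
        _ ≤ max 1 K * ‖u‖ := mul_le_mul_of_nonneg_right (le_max_left 1 K) (norm_nonneg _)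
    · exact h2.trans (mul_le_mul_of_nonneg_right (le_max_right 1 K) (norm_nonneg _))
  refine ⟨Real.toNNReal (max 1 K), by rw [hL]; exact le_max_left 1 K, ?_, ?_⟩
  · intro t
    apply LipschitzWith.of_dist_le_mul
    intro u w
    rw [dist_eq_norm, dist_eq_norm]
    have heq : vf R a b t u - vf R a b t w = vf R a b t (u - w) := by
      simp [vf, Prod.ext_iff, map_sub]
    rw [heq, hL]
    exact key t (u - w)
  · intro t u
    rw [hL]
    exact key t u


lemma exists_short (hRc : Continuous fun t => R (clamp a b t))
    {L : ℝ≥0} (hL1 : 1 ≤ (L : ℝ)) (hlip : ∀ t, LipschitzWith L (vf R a b t))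
    (hnorm : ∀ t u, ‖vf R a b t u‖ ≤ (L : ℝ) * ‖u‖)
    {c d t₁ : ℝ} (h1 : c ≤ t₁) (h2 : t₁ ≤ d)
    (hlen : 2 * (L : ℝ) * (d - c) ≤ 1) (u₀ : EE n) :
    ∃ f : ℝ → EE n, f t₁ = u₀ ∧
      ∀ t ∈ Icc c d, HasDerivWithinAt f (vf R a b t (f t)) (Icc c d) t := by
  have hLpos : (0:ℝ) < L := lt_of_lt_of_le zero_lt_one hL1
  have hpl : IsPicardLindelof (vf R a b) (tmin := c) (tmax := d) ⟨t₁, h1, h2⟩ u₀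
      (‖u₀‖₊ + 1) 0 (L * (2 * ‖u₀‖₊ + 1)) L := by
    constructor
    · exact fun t _ => (hlip t).lipschitzOnWith
    · intro x _
      exact (Continuous.prodMk continuous_const
        (hRc.clm_apply continuous_const)).continuousOn
    · intro t _ x hx
      have hxn : ‖x‖ ≤ 2 * ‖u₀‖ + 1 := by
        have := mem_closedBall_iff_norm.1 hx
        have h4 := norm_sub_norm_le x u₀
        push_cast at this
        linarith
      push_cast
      calc ‖vf R a b t x‖ ≤ (L : ℝ) * ‖x‖ := hnorm t x
        _ ≤ (L : ℝ) * (2 * ‖u₀‖ + 1) := by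
            exact mul_le_mul_of_nonneg_left hxn (le_of_lt hLpos)
    · push_cast
      rw [sub_zero]
      have hmax : max (d - t₁) (t₁ - c) ≤ d - c := by
        apply max_le <;> linarith
      have hnn : (0:ℝ) ≤ (L : ℝ) * (2 * ‖u₀‖ + 1) := by positivity
      calc (L : ℝ) * (2 * ‖u₀‖ + 1) * max (d - t₁) (t₁ - c)
          ≤ (L : ℝ) * (2 * ‖u₀‖ + 1) * (d - c) := mul_le_mul_of_nonneg_left hmax hnn
        _ ≤ ‖u₀‖ + 1 := by nlinarith [norm_nonneg u₀]
  obtain ⟨f, hf1, hf2⟩ := hpl.exists_eq_forall_mem_Icc_hasDerivWithinAt₀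
  exact ⟨f, hf1, hf2⟩

lemma glue {c m d : ℝ} (hcm : c ≤ m) (hmd : m ≤ d)
    {f h : ℝ → EE n}
    (hf : ∀ t ∈ Icc c m, HasDerivWithinAt f (vf R a b t (f t)) (Icc c m) t)
    (hh : ∀ t ∈ Icc m d, HasDerivWithinAt h (vf R a b t (h t)) (Icc m d) t)
    (heq : f m = h m) :
    ∃ z : ℝ → EE n, (∀ t ∈ Icc c d, HasDerivWithinAt z (vf R a b t (z t)) (Icc c d) t)
      ∧ (∀ t ∈ Icc c m, z t = f t) := by
  classical
  set z : ℝ → EE n := fun t => if t ≤ m then f t else h t with hz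
  have hzf : ∀ t ≤ m, z t = f t := fun t ht => if_pos ht
  have hzh : ∀ t, m ≤ t → z t = h t := by
    intro t ht
    rcases eq_or_lt_of_le ht with h' | h'
    · simp [hz, ← h', heq]
    · simp [hz, not_le.2 h']
  refine ⟨z, ?_, fun t ht => hzf t ht.2⟩
  intro t ht
  rcases lt_trichotomy t m with hlt | heqt | hgt
  · have hder : HasDerivWithinAt f (vf R a b t (f t)) (Icc c d ∩ Iio m) t := by
      apply (hf t ⟨ht.1, le_of_lt hlt⟩).mono
      exact fun x hx => ⟨hx.1.1, le_of_lt hx.2⟩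
    have hder2 : HasDerivWithinAt z (vf R a b t (f t)) (Icc c d ∩ Iio m) t := by
      apply hder.congr
      · exact fun y hy => hzf y (le_of_lt hy.2)
      · exact hzf t (le_of_lt hlt)
    rw [show z t = f t from hzf t (le_of_lt hlt)]
    exact (hasDerivWithinAt_inter (Iio_mem_nhds hlt)).1 hder2
  · subst heqt
    have h1 : HasDerivWithinAt z (vf R a b t (z t)) (Icc c t) t := by
      have hc := (hf t ⟨ht.1, le_rfl⟩).congr (fun y hy => hzf y hy.2) (hzf t le_rfl)
      rw [show z t = f t from hzf t le_rfl]
      exact hc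
    have h2 : HasDerivWithinAt z (vf R a b t (z t)) (Icc t d) t := by
      have hc := (hh t ⟨le_rfl, hmd⟩).congr (fun y hy => hzh y hy.1) (hzh t le_rfl)
      rw [show z t = f t from hzf t le_rfl, heq]
      exact hc
    have h3 := h1.union h2
    rwa [Icc_union_Icc_eq_Icc hcm hmd] at h3
  · have hder : HasDerivWithinAt h (vf R a b t (h t)) (Icc c d ∩ Ioi m) t := by
      apply (hh t ⟨le_of_lt hgt, ht.2⟩).mono
      exact fun x hx => ⟨le_of_lt hx.2, hx.1.2⟩
    have hder2 : HasDerivWithinAt z (vf R a b t (h t)) (Icc c d ∩ Ioi m) t := by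
      apply hder.congr
      · exact fun y hy => hzh y (le_of_lt hy.2)
      · exact hzh t (le_of_lt hgt)
    rw [show z t = h t from hzh t (le_of_lt hgt)]
    exact (hasDerivWithinAt_inter (Ioi_mem_nhds hgt)).1 hder2


lemma exists_fw (hRc : Continuous fun t => R (clamp a b t)) (hab : a ≤ b)
    {L : ℝ≥0} (hL1 : 1 ≤ (L : ℝ)) (hlip : ∀ t, LipschitzWith L (vf R a b t))
    (hnorm : ∀ t u, ‖vf R a b t u‖ ≤ (L : ℝ) * ‖u‖) (u₀ : EE n) :
    ∃ f : ℝ → EE n, f a = u₀ ∧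
      ∀ t ∈ Icc a b, HasDerivWithinAt f (vf R a b t (f t)) (Icc a b) t := by
  have hLpos : (0:ℝ) < L := lt_of_lt_of_le zero_lt_one hL1
  set ε : ℝ := 1 / (2 * L) with hε
  have hεpos : 0 < ε := by positivity
  have claim : ∀ k : ℕ, ∃ f : ℝ → EE n, f a = u₀ ∧
      ∀ t ∈ Icc a (min (a + k * ε) b),
        HasDerivWithinAt f (vf R a b t (f t)) (Icc a (min (a + k * ε) b)) t := by
    intro k
    induction k with
    | zero =>
      have hmin : min (a + (0:ℕ) * ε) b = a := by
        simp [min_eq_left hab]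
      rw [hmin]
      apply exists_short R a b hRc hL1 hlip hnorm le_rfl le_rfl
      simp
    | succ k ih =>
      obtain ⟨f, hfa, hf⟩ := ih
      set m : ℝ := min (a + k * ε) b with hm
      set m' : ℝ := min (a + (k + 1 : ℕ) * ε) b with hm'
      have ham : a ≤ m := by
        apply le_min _ hab
        have : (0:ℝ) ≤ k * ε := by positivity
        linarith
      have hmm' : m ≤ m' := by
        apply min_le_min _ le_rfl
        have : (k:ℝ) * ε ≤ ((k:ℕ)+1) * ε := by nlinarith
        push_cast
        linarith
      have hm'b : m' ≤ b := min_le_right _ _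
      have hlen : m' - m ≤ ε := by
        rcases le_total (a + k * ε) b with h' | h'
        · have : m = a + k * ε := min_eq_left h'
          have h2 : m' ≤ a + (k+1:ℕ) * ε := min_le_left _ _
          push_cast at h2 ⊢
          rw [this]
          linarith
        · have h1 : m = b := min_eq_right h'
          have h2 : m' = b := min_eq_right (by push_cast; nlinarith [hεpos, h'])
          rw [h1, h2]
          linarith
      obtain ⟨h, hhm, hh⟩ := exists_short R a b hRc hL1 hlip hnorm
        (le_refl m) hmm' (c := m) (d := m')
        (by rw [hε, div_eq_mul_inv] at hlen
            have h2L : (0:ℝ) < 2 * L := by positivity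
            calc 2 * (L:ℝ) * (m' - m) ≤ 2 * L * (1 * (2*L)⁻¹) := by
                  apply mul_le_mul_of_nonneg_left _ (le_of_lt h2L)
                  simpa using hlen
              _ = 1 := by have := hLpos.ne'; push_cast; field_simp) (f m)
      exact ⟨_, by rw [(glue R a b ham hmm' hf hh hhm.symm).choose_spec.2 a ⟨le_rfl, ham⟩, hfa],
        (glue R a b ham hmm' hf hh hhm.symm).choose_spec.1⟩
  obtain ⟨k, hk⟩ : ∃ k : ℕ, b ≤ a + k * ε := by
    refine ⟨⌈(b - a) / ε⌉₊, ?_⟩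
    have h1 : (b - a) / ε ≤ ⌈(b - a) / ε⌉₊ := Nat.le_ceil _
    rw [div_le_iff₀ hεpos] at h1
    linarith
  obtain ⟨f, hfa, hf⟩ := claim k
  rw [min_eq_right hk] at hf
  exact ⟨f, hfa, hf⟩


lemma uniq {L : ℝ≥0} (hlip : ∀ t, LipschitzWith L (vf R a b t))
    {f h : ℝ → EE n}
    (hf : ∀ t ∈ Icc a b, HasDerivWithinAt f (vf R a b t (f t)) (Icc a b) t)
    (hh : ∀ t ∈ Icc a b, HasDerivWithinAt h (vf R a b t (h t)) (Icc a b) t)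
    {t₁ : ℝ} (ht₁ : t₁ ∈ Icc a b) (heq : f t₁ = h t₁) :
    EqOn f h (Icc a b) := by
  have hvlip : ∀ t, LipschitzOnWith L (vf R a b t) Set.univ :=
    fun t => (hlip t).lipschitzOnWith
  have hfc : ContinuousOn f (Icc a b) := fun t ht => (hf t ht).continuousWithinAt
  have hhc : ContinuousOn h (Icc a b) := fun t ht => (hh t ht).continuousWithinAt
  have hright : ∀ {g : ℝ → EE n},
      (∀ t ∈ Icc a b, HasDerivWithinAt g (vf R a b t (g t)) (Icc a b) t) →
      ∀ t ∈ Ico t₁ b, HasDerivWithinAt g (vf R a b t (g t)) (Ici t) t := by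
    intro g hg t ht
    have h1 : HasDerivWithinAt g (vf R a b t (g t)) (Ici t ∩ Iic b) t := by
      rw [Ici_inter_Iic]
      exact (hg t ⟨le_trans ht₁.1 ht.1, le_of_lt ht.2⟩).mono
        (Icc_subset_Icc (le_trans ht₁.1 ht.1) le_rfl)
    exact (hasDerivWithinAt_inter (Iic_mem_nhds ht.2)).1 h1
  have hleft : ∀ {g : ℝ → EE n},
      (∀ t ∈ Icc a b, HasDerivWithinAt g (vf R a b t (g t)) (Icc a b) t) →
      ∀ t ∈ Ioc a t₁, HasDerivWithinAt g (vf R a b t (g t)) (Iic t) t := by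
    intro g hg t ht
    have h1 : HasDerivWithinAt g (vf R a b t (g t)) (Iic t ∩ Ici a) t := by
      rw [inter_comm, Ici_inter_Iic]
      exact (hg t ⟨le_of_lt ht.1, le_trans ht.2 ht₁.2⟩).mono
        (Icc_subset_Icc le_rfl (le_trans ht.2 ht₁.2))
    exact (hasDerivWithinAt_inter (Ici_mem_nhds ht.1)).1 h1
  have hR : EqOn f h (Icc t₁ b) :=
    ODE_solution_unique_of_mem_Icc_right (fun t _ => hvlip t)
      (hfc.mono (Icc_subset_Icc ht₁.1 le_rfl)) (hright hf) (fun _ _ => mem_univ _)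
      (hhc.mono (Icc_subset_Icc ht₁.1 le_rfl)) (hright hh) (fun _ _ => mem_univ _) heq
  have hL : EqOn f h (Icc a t₁) :=
    ODE_solution_unique_of_mem_Icc_left (fun t _ => hvlip t)
      (hfc.mono (Icc_subset_Icc le_rfl ht₁.2)) (hleft hf) (fun _ _ => mem_univ _)
      (hhc.mono (Icc_subset_Icc le_rfl ht₁.2)) (hleft hh) (fun _ _ => mem_univ _) heq
  intro t ht
  rcases le_total t t₁ with h' | h'
  · exact hL ⟨ht.1, h'⟩
  · exact hR ⟨h', ht.2⟩


def SysSol (f : ℝ → EE n) : Prop :=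
  ∀ t ∈ Icc a b, HasDerivWithinAt f (vf R a b t (f t)) (Icc a b) t

variable (g : (Fin n → ℝ) →ₗ[ℝ] (Fin n → ℝ) →ₗ[ℝ] ℝ)
    (P : Submodule ℝ (Fin n → ℝ)) (S : (Fin n → ℝ) →ₗ[ℝ] (Fin n → ℝ))

lemma sys_of_PS (hab : a < b) {J : ℝ → Fin n → ℝ} (hJ : IsPSSolution g R P S a b J) :
    SysSol R a b (fun t => (J t, derivWithin J (Icc a b) t)) := by
  obtain ⟨hc2, hode, _, _⟩ := hJ
  have hud := uniqueDiffOn_Icc hab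
  intro t ht
  have hJd : DifferentiableOn ℝ J (Icc a b) := hc2.differentiableOn (by norm_num)
  have h1 : HasDerivWithinAt J (derivWithin J (Icc a b) t) (Icc a b) t :=
    (hJd t ht).hasDerivWithinAt
  have hJ' : ContDiffOn ℝ 1 (derivWithin J (Icc a b)) (Icc a b) :=
    hc2.derivWithin hud (by norm_num)
  have h2 : HasDerivWithinAt (derivWithin J (Icc a b))
      (derivWithin (derivWithin J (Icc a b)) (Icc a b) t) (Icc a b) t :=
    ((hJ'.differentiableOn (by norm_num)) t ht).hasDerivWithinAt
  rw [hode t ht] at h2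
  have := h1.prodMk h2
  simpa [vf, clamp_eq ht] using this

lemma PS_of_sys (hab : a < b) (hRcont : ContinuousOn R (Icc a b))
    {f : ℝ → EE n} (hf : SysSol R a b f) :
    (∀ t ∈ Icc a b, derivWithin (fun s => (f s).1) (Icc a b) t = (f t).2) ∧
    ContDiffOn ℝ 2 (fun t => (f t).1) (Icc a b) ∧
    (∀ t ∈ Icc a b,
      derivWithin (derivWithin (fun s => (f s).1) (Icc a b)) (Icc a b) t = R t ((f t).1)) := by
  have hud := uniqueDiffOn_Icc hab
  have h1 : ∀ t ∈ Icc a b,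
      HasDerivWithinAt (fun s => (f s).1) ((f t).2) (Icc a b) t := by
    intro t ht
    exact ((ContinuousLinearMap.fst ℝ (Fin n → ℝ) (Fin n → ℝ)).hasFDerivAt).comp_hasDerivWithinAt
      t (hf t ht)
  have hd1 : ∀ t ∈ Icc a b, derivWithin (fun s => (f s).1) (Icc a b) t = (f t).2 :=
    fun t ht => (h1 t ht).derivWithin (hud t ht)
  have h2 : ∀ t ∈ Icc a b,
      HasDerivWithinAt (fun s => (f s).2) (R t ((f t).1)) (Icc a b) t := by
    intro t ht
    have := ((ContinuousLinearMap.snd ℝ (Fin n → ℝ) (Fin n → ℝ)).hasFDerivAt).comp_hasDerivWithinAt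
      t (hf t ht)
    simpa [vf, clamp_eq ht, Function.comp_def] using this
  refine ⟨hd1, ?_, ?_⟩
  · rw [show (2 : WithTop ℕ∞) = 1 + 1 by norm_num, contDiffOn_succ_iff_derivWithin hud]
    refine ⟨fun t ht => (h1 t ht).differentiableWithinAt, by simp, ?_⟩
    apply ContDiffOn.congr _ (fun t ht => hd1 t ht)
    rw [show (1 : WithTop ℕ∞) = 0 + 1 by norm_num, contDiffOn_succ_iff_derivWithin hud]
    refine ⟨fun t ht => (h2 t ht).differentiableWithinAt, by simp, ?_⟩
    rw [contDiffOn_zero]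
    apply ContinuousOn.congr _ (fun t ht => (h2 t ht).derivWithin (hud t ht))
    have hfc : ContinuousOn f (Icc a b) := fun t ht => (hf t ht).continuousWithinAt
    exact hRcont.clm_apply (continuous_fst.comp_continuousOn hfc)
  · intro t ht
    have e1 : derivWithin (derivWithin (fun s => (f s).1) (Icc a b)) (Icc a b) t
        = derivWithin (fun s => (f s).2) (Icc a b) t :=
      derivWithin_congr (fun x hx => hd1 x hx) (hd1 t ht)
    rw [e1, (h2 t ht).derivWithin (hud t ht)]


def perp (W : Submodule ℝ (Fin n → ℝ)) : Submodule ℝ (Fin n → ℝ) where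
  carrier := {x | ∀ p ∈ W, g x p = 0}
  add_mem' {x y} hx hy := fun p hp => by
    simp [map_add, LinearMap.add_apply, hx p hp, hy p hp]
  zero_mem' := fun p hp => by simp
  smul_mem' c x hx := fun p hp => by
    simp [map_smul, LinearMap.smul_apply, hx p hp]

lemma mem_perp {W : Submodule ℝ (Fin n → ℝ)} {x : Fin n → ℝ} :
    x ∈ perp g W ↔ ∀ p ∈ W, g x p = 0 := Iff.rfl

lemma perp_eq_orthogonal (hgsymm : ∀ x y, g x y = g y x) (W : Submodule ℝ (Fin n → ℝ)) :
    perp g W = LinearMap.BilinForm.orthogonal g W := by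
  ext x
  rw [mem_perp, LinearMap.BilinForm.mem_orthogonal_iff]
  constructor
  · intro hx p hp
    rw [hgsymm]
    exact hx p hp
  · intro hx p hp
    rw [hgsymm]
    exact hx p hp

lemma finrank_perp (hgsymm : ∀ x y, g x y = g y x)
    (hgnd : ∀ x, (∀ y, g x y = 0) → x = 0) (W : Submodule ℝ (Fin n → ℝ)) :
    Module.finrank ℝ (perp g W) = n - Module.finrank ℝ W := by
  rw [perp_eq_orthogonal g hgsymm W]
  have hrefl : g.IsRefl := fun x y hxy => by rw [hgsymm]; exact hxy
  rw [LinearMap.BilinForm.finrank_orthogonal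
    ⟨hgnd, fun y hy => hgnd y (fun x => by rw [hgsymm]; exact hy x)⟩ W, Module.finrank_fin_fun]

/-- continuous bilinear version of `g` -/
def gc : (Fin n → ℝ) →L[ℝ] ((Fin n → ℝ) →L[ℝ] ℝ) :=
  LinearMap.toContinuousLinearMap
    ((LinearMap.toContinuousLinearMap :
      ((Fin n → ℝ) →ₗ[ℝ] ℝ) ≃ₗ[ℝ] ((Fin n → ℝ) →L[ℝ] ℝ)).toLinearMap.comp g)

lemma gc_apply (x y : Fin n → ℝ) : gc g x y = g x y := rfl

lemma wronskian (hab : a < b) (hgsymm : ∀ x y, g x y = g y x)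
    (hRsymm : ∀ t ∈ Icc a b, ∀ x y, g (R t x) y = g x (R t y))
    (hSsymm : ∀ x ∈ P, ∀ y ∈ P, g (S x) y = g x (S y))
    {f h : ℝ → EE n} (hf : SysSol R a b f) (hh : SysSol R a b h)
    (hfP : (f a).1 ∈ P) (hfperp : (f a).2 + S (f a).1 ∈ perp g P)
    (hhP : (h a).1 ∈ P) (hhperp : (h a).2 + S (h a).1 ∈ perp g P)
    {t₀ : ℝ} (ht₀ : t₀ ∈ Icc a b) :
    g ((f t₀).2) ((h t₀).1) - g ((f t₀).1) ((h t₀).2) = 0 := by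
  have hud := uniqueDiffOn_Icc hab
  set Wr : ℝ → ℝ := fun t => gc g ((f t).2) ((h t).1) - gc g ((f t).1) ((h t).2) with hWr
  have hder : ∀ {z : ℝ → EE n}, SysSol R a b z → ∀ t ∈ Icc a b,
      HasDerivWithinAt (fun s => (z s).1) ((z t).2) (Icc a b) t ∧
      HasDerivWithinAt (fun s => (z s).2) (R t ((z t).1)) (Icc a b) t := by
    intro z hz t ht
    constructor
    · exact ((ContinuousLinearMap.fst ℝ (Fin n → ℝ)
        (Fin n → ℝ)).hasFDerivAt).comp_hasDerivWithinAt t (hz t ht)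
    · have := ((ContinuousLinearMap.snd ℝ (Fin n → ℝ)
        (Fin n → ℝ)).hasFDerivAt).comp_hasDerivWithinAt t (hz t ht)
      simpa [vf, clamp_eq ht, Function.comp_def] using this
  have hWder : ∀ t ∈ Icc a b, HasDerivWithinAt Wr 0 (Icc a b) t := by
    intro t ht
    obtain ⟨hf1, hf2⟩ := hder hf t ht
    obtain ⟨hh1, hh2⟩ := hder hh t ht
    have c1 : HasDerivWithinAt (fun s => gc g ((f s).2))
        (gc g (R t ((f t).1))) (Icc a b) t :=
      ((gc g).hasFDerivAt).comp_hasDerivWithinAt t hf2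
    have c2 : HasDerivWithinAt (fun s => gc g ((f s).1))
        (gc g ((f t).2)) (Icc a b) t :=
      ((gc g).hasFDerivAt).comp_hasDerivWithinAt t hf1
    have t1 : HasDerivWithinAt (fun s => gc g ((f s).2) ((h s).1))
        (gc g (R t ((f t).1)) ((h t).1) + gc g ((f t).2) ((h t).2)) (Icc a b) t :=
      c1.clm_apply hh1
    have t2 : HasDerivWithinAt (fun s => gc g ((f s).1) ((h s).2))
        (gc g ((f t).2) ((h t).2) + gc g ((f t).1) (R t ((h t).1))) (Icc a b) t :=
      c2.clm_apply hh2
    have t3 := t1.sub t2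
    have hzero : (gc g (R t ((f t).1)) ((h t).1) + gc g ((f t).2) ((h t).2)) -
        (gc g ((f t).2) ((h t).2) + gc g ((f t).1) (R t ((h t).1))) = 0 := by
      simp only [gc_apply]
      have := hRsymm t ht ((f t).1) ((h t).1)
      linarith
    rwa [hzero] at t3
  have hconst : ∀ t ∈ Icc a b, Wr t = Wr a :=
    constant_of_derivWithin_zero
      (fun t ht => (hWder t ht).differentiableWithinAt)
      (fun t ht => (hWder t (mem_Icc_of_Ico ht)).derivWithin (hud t (mem_Icc_of_Ico ht)))
  have hWa : Wr a = 0 := by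
    have e1 : (f a).2 = ((f a).2 + S ((f a).1)) - S ((f a).1) := by abel
    have e2 : (h a).2 = ((h a).2 + S ((h a).1)) - S ((h a).1) := by abel
    have q1 : g ((f a).2 + S ((f a).1)) ((h a).1) = 0 := hfperp _ hhP
    have q2 : g ((f a).1) ((h a).2 + S ((h a).1)) = 0 := by
      rw [hgsymm]
      exact hhperp _ hfP
    have q3 := hSsymm ((f a).1) hfP ((h a).1) hhP
    simp only [hWr, gc_apply]
    rw [e1, e2]
    simp only [map_sub, LinearMap.sub_apply]
    rw [q1] at *
    linarith
  have := hconst t₀ ht₀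
  rw [hWa] at this
  simpa [hWr, gc_apply] using this


set_option maxHeartbeats 1000000 in
set_option synthInstance.maxHeartbeats 400000 in
theorem main (hab : a < b)
    (hgsymm : ∀ x y, g x y = g y x)
    (hgnd : ∀ x, (∀ y, g x y = 0) → x = 0)
    (hRcont : ContinuousOn R (Icc a b))
    (hRsymm : ∀ t ∈ Icc a b, ∀ x y, g (R t x) y = g x (R t y))
    (hSsymm : ∀ x ∈ P, ∀ y ∈ P, g (S x) y = g x (S y))
    (t₀ : ℝ) (ht₀ : t₀ ∈ Icc a b) :
    {x | ∃ J : ℝ → Fin n → ℝ, IsPSSolution g R P S a b J ∧ J t₀ = 0 ∧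
        derivWithin J (Icc a b) t₀ = x}
      = {x | ∀ w ∈ solSpace g R P S a b t₀, g x w = 0} := by
  classical
  have habl : a ≤ b := hab.le
  have hRc := cont_Rclamp R a b hRcont habl
  obtain ⟨L, hL1, hlip, hnorm⟩ := exists_lip R a b hRcont habl
  have ha : a ∈ Icc a b := ⟨le_rfl, habl⟩
  choose sol hsola hsolsys using fun u₀ : EE n => exists_fw R a b hRc habl hL1 hlip hnorm u₀
  have hsum : ∀ {f h : ℝ → EE n}, SysSol R a b f → SysSol R a b h →
      SysSol R a b (f + h) := by
    intro f h hf hh t ht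
    have h1 := (hf t ht).add (hh t ht)
    rw [← vf_add] at h1
    exact h1
  have hsmul : ∀ (c : ℝ) {f : ℝ → EE n}, SysSol R a b f → SysSol R a b (c • f) := by
    intro c f hf t ht
    have h1 := (hf t ht).const_smul c
    rw [← vf_smul] at h1
    exact h1
  let τ : EE n →ₗ[ℝ] EE n :=
    { toFun := fun u => sol u t₀
      map_add' := by
        intro u w
        have h1 : SysSol R a b (sol u + sol w) := hsum (hsolsys u) (hsolsys w)
        have h2 := uniq R a b hlip (hsolsys (u + w)) h1 ha
          (by simp [hsola, Pi.add_apply])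
        exact h2 ht₀
      map_smul' := by
        intro c u
        have h1 : SysSol R a b (c • sol u) := hsmul c (hsolsys u)
        have h2 := uniq R a b hlip (hsolsys (c • u)) h1 ha
          (by simp [hsola, Pi.smul_apply])
        exact h2 ht₀ }
  have hτ : ∀ u, τ u = sol u t₀ := fun u => rfl
  have τinj : Function.Injective τ := by
    intro u w huw
    rw [hτ, hτ] at huw
    have h2 := uniq R a b hlip (hsolsys u) (hsolsys w) ht₀ huw
    have h3 := h2 ha
    rwa [hsola, hsola] at h3
  let β : (P × perp g P) →ₗ[ℝ] EE n :=
    { toFun := fun pq => ((pq.1 : Fin n → ℝ), (pq.2 : Fin n → ℝ) - S pq.1)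
      map_add' := by
        intro x y
        refine Prod.ext rfl ?_
        show (↑(x.2 + y.2) : Fin n → ℝ) - S ↑(x.1 + y.1) = (↑x.2 - S ↑x.1) + (↑y.2 - S ↑y.1)
        simp only [Submodule.coe_add, map_add]
        abel
      map_smul' := by
        intro c x
        refine Prod.ext rfl ?_
        show (↑(c • x.2) : Fin n → ℝ) - S ↑(c • x.1) = c • (↑x.2 - S ↑x.1)
        simp only [Submodule.coe_smul, map_smul, smul_sub] }
  have hβ : ∀ pq : P × perp g P,
      β pq = ((pq.1 : Fin n → ℝ), (pq.2 : Fin n → ℝ) - S pq.1) := fun _ => rfl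
  have hB₀ : ∀ u : EE n, u ∈ LinearMap.range β ↔
      (u.1 ∈ P ∧ u.2 + S u.1 ∈ perp g P) := by
    intro u
    constructor
    · rintro ⟨⟨p, q⟩, rfl⟩
      rw [hβ]
      refine ⟨p.2, ?_⟩
      rw [show (q : Fin n → ℝ) - S ↑p + S ↑p = ↑q by simp]
      exact q.2
    · rintro ⟨h1, h2⟩
      refine ⟨(⟨u.1, h1⟩, ⟨u.2 + S u.1, h2⟩), ?_⟩
      rw [hβ]
      exact Prod.ext rfl (by simp)
  have βinj : Function.Injective β := by
    intro x y hxy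
    rw [hβ, hβ, Prod.mk.injEq] at hxy
    obtain ⟨h1, h2⟩ := hxy
    rw [h1] at h2
    have h2' : (x.2 : Fin n → ℝ) = (y.2 : Fin n → ℝ) := by
      have := sub_left_inj.1 h2
      exact this
    exact Prod.ext (Subtype.ext h1) (Subtype.ext h2')
  set M : Submodule ℝ (EE n) := Submodule.map τ (LinearMap.range β) with hMdef
  have hMchar : ∀ u : EE n, u ∈ M ↔
      ∃ f : ℝ → EE n, SysSol R a b f ∧ (f a).1 ∈ P ∧
        (f a).2 + S (f a).1 ∈ perp g P ∧ f t₀ = u := by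
    intro u
    constructor
    · rintro ⟨w, hw, rfl⟩
      rw [hτ]
      refine ⟨sol w, hsolsys w, ?_, ?_, rfl⟩
      · rw [hsola]; exact ((hB₀ w).1 hw).1
      · rw [hsola]; exact ((hB₀ w).1 hw).2
    · rintro ⟨f, hfs, h1, h2, rfl⟩
      refine ⟨f a, (hB₀ (f a)).2 ⟨h1, h2⟩, ?_⟩
      rw [hτ]
      exact (uniq R a b hlip (hsolsys (f a)) hfs ha (by rw [hsola])) ht₀
  have hPSchar : ∀ u : EE n, u ∈ M ↔
      ∃ J : ℝ → Fin n → ℝ, IsPSSolution g R P S a b J ∧ J t₀ = u.1 ∧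
        derivWithin J (Icc a b) t₀ = u.2 := by
    intro u
    rw [hMchar u]
    constructor
    · rintro ⟨f, hfs, h1, h2, rfl⟩
      obtain ⟨hd1, hcd, hode⟩ := PS_of_sys R a b hab hRcont hfs
      refine ⟨fun t => (f t).1, ⟨hcd, hode, h1, ?_⟩, rfl, hd1 t₀ ht₀⟩
      rw [hd1 a ha]
      exact h2
    · rintro ⟨J, hJ, hJ1, hJ2⟩
      refine ⟨fun t => (J t, derivWithin J (Icc a b) t),
        sys_of_PS R a b g P S hab hJ, hJ.2.2.1, hJ.2.2.2, Prod.ext hJ1 hJ2⟩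
  have hMn : Module.finrank ℝ M = n := by
    rw [hMdef, ← (Submodule.equivMapOfInjective τ τinj (LinearMap.range β)).finrank_eq]
    have h1 := LinearMap.finrank_range_add_finrank_ker β
    rw [LinearMap.ker_eq_bot.2 βinj, finrank_bot, add_zero] at h1
    rw [h1, Module.finrank_prod, finrank_perp g hgsymm hgnd P]
    have hPle : Module.finrank ℝ P ≤ n := by
      have h2 := Submodule.finrank_le P
      rwa [Module.finrank_fin_fun] at h2
    omega
  set fst' : EE n →ₗ[ℝ] (Fin n → ℝ) := LinearMap.fst ℝ (Fin n → ℝ) (Fin n → ℝ) with hfst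
  set snd' : EE n →ₗ[ℝ] (Fin n → ℝ) := LinearMap.snd ℝ (Fin n → ℝ) (Fin n → ℝ) with hsnd
  set V : Submodule ℝ (Fin n → ℝ) := Submodule.map fst' M with hVdef
  set Wk : Submodule ℝ (EE n) := LinearMap.ker fst' ⊓ M with hWkdef
  set D : Submodule ℝ (Fin n → ℝ) := Submodule.map snd' Wk with hDdef
  have hrank : Module.finrank ℝ V + Module.finrank ℝ Wk = n := by
    have h1 := LinearMap.finrank_range_add_finrank_ker (fst'.comp M.subtype)
    rw [LinearMap.range_comp, Submodule.range_subtype, LinearMap.ker_comp] at h1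
    have e2 : Submodule.comap M.subtype (LinearMap.ker fst') =
        Submodule.comap M.subtype (LinearMap.ker fst' ⊓ M) := by
      ext y
      rw [Submodule.mem_comap, Submodule.mem_comap, Submodule.mem_inf]
      exact (and_iff_left y.2).symm
    have e3 : Module.finrank ℝ
        (Submodule.comap M.subtype (LinearMap.ker fst' ⊓ M)) = Module.finrank ℝ Wk :=
      LinearEquiv.finrank_eq (Submodule.comapSubtypeEquivOfLe
        (inf_le_right : LinearMap.ker fst' ⊓ M ≤ M))
    rw [e2, e3, hMn] at h1
    exact h1
  have hDWk : Module.finrank ℝ D = Module.finrank ℝ Wk := by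
    have h1 := LinearMap.finrank_range_add_finrank_ker (snd'.comp Wk.subtype)
    have hker : LinearMap.ker (snd'.comp Wk.subtype) = ⊥ := by
      rw [LinearMap.ker_eq_bot']
      intro m hm
      have h1' : ((m : EE n)).1 = 0 := m.2.1
      have h2' : ((m : EE n)).2 = 0 := hm
      exact Subtype.ext (Prod.ext h1' h2')
    rw [hker, finrank_bot, add_zero, LinearMap.range_comp, Submodule.range_subtype] at h1
    exact h1
  have hDle : D ≤ perp g V := by
    rintro x ⟨u, hu, rfl⟩
    obtain ⟨huk, huM⟩ := hu
    rw [mem_perp]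
    intro w hw
    obtain ⟨f, hfs, hf1, hf2, hft⟩ := (hMchar u).1 huM
    obtain ⟨uh, huhM, rfl⟩ := hw
    obtain ⟨h, hhs, hh1, hh2, hht⟩ := (hMchar uh).1 huhM
    have hwr := wronskian R a b g P S hab hgsymm hRsymm hSsymm hfs hhs hf1 hf2 hh1 hh2 ht₀
    rw [hft, hht] at hwr
    have hu1 : u.1 = 0 := huk
    rw [hu1] at hwr
    exact (by simpa using hwr : g u.2 uh.1 = 0)
  have hVle : Module.finrank ℝ V ≤ n := by
    have h2 := Submodule.finrank_le V
    rwa [Module.finrank_fin_fun] at h2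
  have hDeq : D = perp g V := by
    apply Submodule.eq_of_le_of_finrank_le hDle
    rw [finrank_perp g hgsymm hgnd V, hDWk]
    omega
  have hsolV : ∀ w, w ∈ solSpace g R P S a b t₀ ↔ w ∈ V := by
    intro w
    constructor
    · rintro ⟨J, hJ, rfl⟩
      exact ⟨(J t₀, derivWithin J (Icc a b) t₀), (hPSchar _).2 ⟨J, hJ, rfl, rfl⟩, rfl⟩
    · rintro ⟨u, huM, rfl⟩
      obtain ⟨J, hJ, hJ1, _⟩ := (hPSchar u).1 huM
      exact ⟨J, hJ, hJ1⟩
  ext x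
  simp only [mem_setOf_eq]
  constructor
  · rintro ⟨J, hJ, hJ0, hJd⟩ w hw
    have hxD : x ∈ D := by
      refine ⟨(0, x), ⟨LinearMap.mem_ker.2 rfl, (hPSchar (0, x)).2 ⟨J, hJ, hJ0, hJd⟩⟩, rfl⟩
    rw [hDeq, mem_perp] at hxD
    exact hxD w ((hsolV w).1 hw)
  · intro hx
    have hxperp : x ∈ perp g V := (mem_perp g).2 (fun w hw => hx w ((hsolV w).2 hw))
    rw [← hDeq] at hxperp
    obtain ⟨u, ⟨huk, huM⟩, rfl⟩ := hxperp
    obtain ⟨J, hJ, hJ1, hJ2⟩ := (hPSchar u).1 huM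
    have hu1 : u.1 = 0 := huk
    exact ⟨J, hJ, by rw [hJ1, hu1], hJ2⟩

end JacobiAux

end JacobiAux

/-- For every `t₀ ∈ [a,b]`, the set `{J'(t₀) : J a (P,S)-solution with J(t₀) = 0}` equals the
`g`-orthogonal complement of `𝕁[t₀]` in `ℝⁿ`. -/
theorem derivs_of_vanishing_solutions_eq_orthogonal {n : ℕ}
    (g : (Fin n → ℝ) →ₗ[ℝ] (Fin n → ℝ) →ₗ[ℝ] ℝ)
    (R : ℝ → (Fin n → ℝ) →L[ℝ] (Fin n → ℝ))
    (P : Submodule ℝ (Fin n → ℝ)) (S : (Fin n → ℝ) →ₗ[ℝ] (Fin n → ℝ))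
    (a b : ℝ) (hab : a < b)
    (hgsymm : ∀ x y, g x y = g y x)
    (hgnd : ∀ x, (∀ y, g x y = 0) → x = 0)
    (hRcont : ContinuousOn R (Icc a b))
    (hRsymm : ∀ t ∈ Icc a b, ∀ x y, g (R t x) y = g x (R t y))
    (hPnd : ∀ x ∈ P, (∀ y ∈ P, g x y = 0) → x = 0)
    (hSP : ∀ x ∈ P, S x ∈ P)
    (hSsymm : ∀ x ∈ P, ∀ y ∈ P, g (S x) y = g x (S y))
    (t₀ : ℝ) (ht₀ : t₀ ∈ Icc a b) :
    {x | ∃ J : ℝ → Fin n → ℝ, IsPSSolution g R P S a b J ∧ J t₀ = 0 ∧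
        derivWithin J (Icc a b) t₀ = x}
      = {x | ∀ w ∈ solSpace g R P S a b t₀, g x w = 0} :=
  JacobiAux.main R a b g P S hab hgsymm hgnd hRcont hRsymm hSsymm t₀ ht₀
end

section
/- Let (g,R,P,S) be an admissible quadruple for the differential problem in ℝⁿ on [a,b] in which g is positive definite. Then the set of (P,S)-focal instants in (a,b] is finite. -/
open Set Filter Topology

open Set

lemma ode_uniq {n : ℕ} (R : ℝ → (Fin n → ℝ) →L[ℝ] (Fin n → ℝ)) {a b : ℝ} (hab : a ≤ b)
    (hRcont : ContinuousOn R (Icc a b))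
    {J K : ℝ → Fin n → ℝ}
    (hJc : ContinuousOn J (Icc a b)) (hJ'c : ContinuousOn (derivWithin J (Icc a b)) (Icc a b))
    (hJd : ∀ t ∈ Icc a b, HasDerivWithinAt J (derivWithin J (Icc a b) t) (Icc a b) t)
    (hJd2 : ∀ t ∈ Icc a b, HasDerivWithinAt (derivWithin J (Icc a b)) (R t (J t)) (Icc a b) t)
    (hKc : ContinuousOn K (Icc a b)) (hK'c : ContinuousOn (derivWithin K (Icc a b)) (Icc a b))
    (hKd : ∀ t ∈ Icc a b, HasDerivWithinAt K (derivWithin K (Icc a b) t) (Icc a b) t)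
    (hKd2 : ∀ t ∈ Icc a b, HasDerivWithinAt (derivWithin K (Icc a b)) (R t (K t)) (Icc a b) t)
    {t₀ : ℝ} (ht₀ : t₀ ∈ Icc a b)
    (h0 : J t₀ = K t₀) (h1 : derivWithin J (Icc a b) t₀ = derivWithin K (Icc a b) t₀) :
    ∀ t ∈ Icc a b, J t = K t := by
  obtain ⟨C, hC⟩ := (isCompact_Icc).exists_bound_of_continuousOn hRcont
  have hC0 : (0:ℝ) ≤ max 1 C := le_trans zero_le_one (le_max_left _ _)
  set L : NNReal := ⟨max 1 C, hC0⟩ with hL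
  set cl : ℝ → ℝ := fun t => max a (min b t) with hcldef
  have hcl : ∀ t, cl t ∈ Icc a b := fun t => ⟨le_max_left _ _, max_le hab (min_le_left _ _)⟩
  have hclid : ∀ t ∈ Icc a b, cl t = t := by
    intro t ht
    simp only [hcldef]
    rw [min_eq_right ht.2, max_eq_right ht.1]
  set vv : ℝ → ((Fin n → ℝ) × (Fin n → ℝ)) → ((Fin n → ℝ) × (Fin n → ℝ)) :=
    fun t p => (p.2, R (cl t) p.1) with hvv
  have hv : ∀ t, LipschitzOnWith L (vv t) univ := by
    intro t
    apply LipschitzWith.lipschitzOnWith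
    apply LipschitzWith.of_dist_le_mul
    intro p q
    have hd1 : dist p.1 q.1 ≤ dist p q := le_max_left _ _
    have hd2 : dist p.2 q.2 ≤ dist p q := le_max_right _ _
    have hLcoe : (L : ℝ) = max 1 C := rfl
    rw [Prod.dist_eq, hLcoe]
    apply max_le
    · calc dist p.2 q.2 ≤ dist p q := hd2
        _ ≤ max 1 C * dist p q := le_mul_of_one_le_left dist_nonneg (le_max_left _ _)
    · calc dist (R (cl t) p.1) (R (cl t) q.1) ≤ ‖R (cl t)‖ * dist p.1 q.1 :=
            (R (cl t)).lipschitz.dist_le_mul p.1 q.1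
        _ ≤ max 1 C * dist p q := by
            apply mul_le_mul (le_trans (hC _ (hcl t)) (le_max_right _ _)) hd1 dist_nonneg hC0
  set f : ℝ → ((Fin n → ℝ) × (Fin n → ℝ)) := fun t => (J t, derivWithin J (Icc a b) t) with hf
  set k : ℝ → ((Fin n → ℝ) × (Fin n → ℝ)) := fun t => (K t, derivWithin K (Icc a b) t) with hk
  have hfc : ContinuousOn f (Icc a b) := hJc.prodMk hJ'c
  have hkc : ContinuousOn k (Icc a b) := hKc.prodMk hK'c
  have hfd : ∀ t ∈ Icc a b, HasDerivWithinAt f (vv t (f t)) (Icc a b) t := by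
    intro t ht
    have := (hJd t ht).prodMk (hJd2 t ht)
    simpa [hvv, hclid t ht] using this
  have hkd : ∀ t ∈ Icc a b, HasDerivWithinAt k (vv t (k t)) (Icc a b) t := by
    intro t ht
    have := (hKd t ht).prodMk (hKd2 t ht)
    simpa [hvv, hclid t ht] using this
  have hfk0 : f t₀ = k t₀ := by simp [hf, hk, h0, h1]
  have key : ∀ t ∈ Icc a b, f t = k t := by
    intro t ht
    rcases le_or_gt t t₀ with h | h
    · have := ODE_solution_unique_of_mem_Icc_left (v := vv) (s := fun _ => univ) (fun t _ => hv t)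
        (hfc.mono (Icc_subset_Icc le_rfl ht₀.2))
        (fun τ hτ => (hfd τ ⟨le_of_lt hτ.1, le_trans hτ.2 ht₀.2⟩).mono_of_mem_nhdsWithin
          (Icc_mem_nhdsLE_of_mem ⟨hτ.1, le_trans hτ.2 ht₀.2⟩))
        (fun _ _ => mem_univ _)
        (hkc.mono (Icc_subset_Icc le_rfl ht₀.2))
        (fun τ hτ => (hkd τ ⟨le_of_lt hτ.1, le_trans hτ.2 ht₀.2⟩).mono_of_mem_nhdsWithin
          (Icc_mem_nhdsLE_of_mem ⟨hτ.1, le_trans hτ.2 ht₀.2⟩))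
        (fun _ _ => mem_univ _) hfk0
      exact this ⟨ht.1, h⟩
    · have := ODE_solution_unique_of_mem_Icc_right (v := vv) (s := fun _ => univ) (fun t _ => hv t)
        (hfc.mono (Icc_subset_Icc ht₀.1 le_rfl))
        (fun τ hτ => (hfd τ ⟨le_trans ht₀.1 hτ.1, le_of_lt hτ.2⟩).mono_of_mem_nhdsWithin
          (Icc_mem_nhdsGE_of_mem ⟨le_trans ht₀.1 hτ.1, hτ.2⟩))
        (fun _ _ => mem_univ _)
        (hkc.mono (Icc_subset_Icc ht₀.1 le_rfl))
        (fun τ hτ => (hkd τ ⟨le_trans ht₀.1 hτ.1, le_of_lt hτ.2⟩).mono_of_mem_nhdsWithin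
          (Icc_mem_nhdsGE_of_mem ⟨le_trans ht₀.1 hτ.1, hτ.2⟩))
        (fun _ _ => mem_univ _) hfk0
      exact this ⟨le_of_lt h, ht.2⟩
  intro t ht
  have := key t ht
  exact congrArg Prod.fst this

lemma sol_hyps {n : ℕ} {g : (Fin n → ℝ) →ₗ[ℝ] (Fin n → ℝ) →ₗ[ℝ] ℝ}
    {R : ℝ → (Fin n → ℝ) →L[ℝ] (Fin n → ℝ)}
    {P : Submodule ℝ (Fin n → ℝ)} {S : (Fin n → ℝ) →ₗ[ℝ] (Fin n → ℝ)}
    {a b : ℝ} (hab : a < b) {J : ℝ → Fin n → ℝ} (hJ : IsPSSolution g R P S a b J) :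
    ContinuousOn J (Icc a b) ∧ ContinuousOn (derivWithin J (Icc a b)) (Icc a b) ∧
    (∀ t ∈ Icc a b, HasDerivWithinAt J (derivWithin J (Icc a b) t) (Icc a b) t) ∧
    (∀ t ∈ Icc a b, HasDerivWithinAt (derivWithin J (Icc a b)) (R t (J t)) (Icc a b) t) := by
  have hUD : UniqueDiffOn ℝ (Icc a b) := uniqueDiffOn_Icc hab
  have h2 : ContDiffOn ℝ 2 J (Icc a b) := hJ.1
  have hdJ : DifferentiableOn ℝ J (Icc a b) := h2.differentiableOn (by norm_num)
  have hJ'cd : ContDiffOn ℝ 1 (derivWithin J (Icc a b)) (Icc a b) :=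
    h2.derivWithin hUD (by norm_num)
  have hdJ' : DifferentiableOn ℝ (derivWithin J (Icc a b)) (Icc a b) :=
    hJ'cd.differentiableOn (by norm_num)
  refine ⟨hdJ.continuousOn, hJ'cd.continuousOn, fun t ht => (hdJ t ht).hasDerivWithinAt, ?_⟩
  intro t ht
  have := (hdJ' t ht).hasDerivWithinAt
  rwa [hJ.2.1 t ht] at this

lemma comb_sol {n : ℕ} {g : (Fin n → ℝ) →ₗ[ℝ] (Fin n → ℝ) →ₗ[ℝ] ℝ}
    {R : ℝ → (Fin n → ℝ) →L[ℝ] (Fin n → ℝ)}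
    {P : Submodule ℝ (Fin n → ℝ)} {S : (Fin n → ℝ) →ₗ[ℝ] (Fin n → ℝ)}
    {a b : ℝ} (hab : a < b) {ι : Type} [Fintype ι] {F : ι → ℝ → Fin n → ℝ}
    (hF : ∀ i, IsPSSolution g R P S a b (F i)) (c : ι → ℝ) :
    IsPSSolution g R P S a b (fun t => ∑ i, c i • F i t) ∧
    ∀ t ∈ Icc a b, derivWithin (fun t => ∑ i, c i • F i t) (Icc a b) t
      = ∑ i, c i • derivWithin (F i) (Icc a b) t := by
  have hUD : UniqueDiffOn ℝ (Icc a b) := uniqueDiffOn_Icc hab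
  have hab' : a ∈ Icc a b := ⟨le_rfl, le_of_lt hab⟩
  have hfacts := fun i => sol_hyps hab (hF i)
  have hderiv : ∀ t ∈ Icc a b, HasDerivWithinAt (fun t => ∑ i, c i • F i t)
      (∑ i, c i • derivWithin (F i) (Icc a b) t) (Icc a b) t := by
    intro t ht
    exact HasDerivWithinAt.fun_sum (fun i _ => ((hfacts i).2.2.1 t ht).const_smul (c i))
  have hderiv' : ∀ t ∈ Icc a b, derivWithin (fun t => ∑ i, c i • F i t) (Icc a b) t
      = ∑ i, c i • derivWithin (F i) (Icc a b) t := by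
    intro t ht
    exact (hderiv t ht).derivWithin (hUD t ht)
  refine ⟨⟨?_, ?_, ?_, ?_⟩, hderiv'⟩
  · exact ContDiffOn.sum (fun i _ => ((hF i).1.const_smul (c i)))
  · intro t ht
    have heq : derivWithin (derivWithin (fun t => ∑ i, c i • F i t) (Icc a b)) (Icc a b) t
        = derivWithin (fun τ => ∑ i, c i • derivWithin (F i) (Icc a b) τ) (Icc a b) t :=
      derivWithin_congr (fun τ hτ => hderiv' τ hτ) (hderiv' t ht)
    rw [heq]
    have h2 : HasDerivWithinAt (fun τ => ∑ i, c i • derivWithin (F i) (Icc a b) τ)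
        (∑ i, c i • R t (F i t)) (Icc a b) t :=
      HasDerivWithinAt.fun_sum (fun i _ => ((hfacts i).2.2.2 t ht).const_smul (c i))
    rw [h2.derivWithin (hUD t ht)]
    show ∑ i, c i • R t (F i t) = R t (∑ i, c i • F i t)
    rw [map_sum]
    exact Finset.sum_congr rfl (fun i _ => by rw [(R t).map_smul])
  · exact Submodule.sum_mem _ (fun i _ => Submodule.smul_mem _ _ (hF i).2.2.1)
  · intro p hp
    rw [hderiv' a hab']
    have : (∑ i, c i • derivWithin (F i) (Icc a b) a) + S (∑ i, c i • F i a)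
        = ∑ i, c i • (derivWithin (F i) (Icc a b) a + S (F i a)) := by
      rw [map_sum]
      rw [← Finset.sum_add_distrib]
      exact Finset.sum_congr rfl (fun i _ => by rw [map_smul, smul_add])
    rw [this, map_sum, LinearMap.sum_apply]
    refine Finset.sum_eq_zero (fun i _ => ?_)
    rw [map_smul, LinearMap.smul_apply, (hF i).2.2.2 p hp, smul_zero]

noncomputable def gCLM {n : ℕ} (g : (Fin n → ℝ) →ₗ[ℝ] (Fin n → ℝ) →ₗ[ℝ] ℝ) :
    (Fin n → ℝ) →L[ℝ] (Fin n → ℝ) →L[ℝ] ℝ :=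
  LinearMap.toContinuousLinearMap
    ((LinearMap.toContinuousLinearMap :
      ((Fin n → ℝ) →ₗ[ℝ] ℝ) ≃ₗ[ℝ] ((Fin n → ℝ) →L[ℝ] ℝ)).toLinearMap.comp g)

@[simp] lemma gCLM_apply {n : ℕ} (g : (Fin n → ℝ) →ₗ[ℝ] (Fin n → ℝ) →ₗ[ℝ] ℝ)
    (x y : Fin n → ℝ) : gCLM g x y = g x y := rfl

lemma lagrange {n : ℕ} {g : (Fin n → ℝ) →ₗ[ℝ] (Fin n → ℝ) →ₗ[ℝ] ℝ}
    {R : ℝ → (Fin n → ℝ) →L[ℝ] (Fin n → ℝ)}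
    {P : Submodule ℝ (Fin n → ℝ)} {S : (Fin n → ℝ) →ₗ[ℝ] (Fin n → ℝ)}
    {a b : ℝ} (hab : a < b)
    (hgsymm : ∀ x y, g x y = g y x)
    (hRsymm : ∀ t ∈ Icc a b, ∀ x y, g (R t x) y = g x (R t y))
    (hSsymm : ∀ x ∈ P, ∀ y ∈ P, g (S x) y = g x (S y))
    {J K : ℝ → Fin n → ℝ}
    (hJ : IsPSSolution g R P S a b J) (hK : IsPSSolution g R P S a b K) :
    ∀ t ∈ Icc a b,
      g (derivWithin J (Icc a b) t) (K t) = g (J t) (derivWithin K (Icc a b) t) := by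
  have hab' : a ∈ Icc a b := ⟨le_rfl, le_of_lt hab⟩
  obtain ⟨hJc, hJ'c, hJd, hJd2⟩ := sol_hyps hab hJ
  obtain ⟨hKc, hK'c, hKd, hKd2⟩ := sol_hyps hab hK
  set J' := derivWithin J (Icc a b) with hJ'def
  set K' := derivWithin K (Icc a b) with hK'def
  set B := gCLM g with hBdef
  have hB : ∀ x y, B x y = g x y := fun x y => rfl
  set h : ℝ → ℝ := fun t => B (J' t) (K t) - B (J t) (K' t) with hhdef
  have hder : ∀ t ∈ Icc a b, HasDerivWithinAt h 0 (Icc a b) t := by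
    intro t ht
    have h1 : HasDerivWithinAt (fun τ => B (J' τ)) (B (R t (J t))) (Icc a b) t :=
      B.hasFDerivAt.comp_hasDerivWithinAt t (hJd2 t ht)
    have h2 : HasDerivWithinAt (fun τ => B (J τ)) (B (J' t)) (Icc a b) t :=
      B.hasFDerivAt.comp_hasDerivWithinAt t (hJd t ht)
    have hA : HasDerivWithinAt (fun τ => B (J' τ) (K τ))
        (B (R t (J t)) (K t) + B (J' t) (K' t)) (Icc a b) t :=
      h1.clm_apply (hKd t ht)
    have hB2 : HasDerivWithinAt (fun τ => B (J τ) (K' τ))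
        (B (J' t) (K' t) + B (J t) (R t (K t))) (Icc a b) t :=
      h2.clm_apply (hKd2 t ht)
    have := hA.sub hB2
    have hzero : B (R t (J t)) (K t) + B (J' t) (K' t)
        - (B (J' t) (K' t) + B (J t) (R t (K t))) = 0 := by
      simp only [hB]
      rw [hRsymm t ht (J t) (K t)]
      ring
    rwa [hzero] at this
  have hcont : ContinuousOn h (Icc a b) := fun t ht => ((hder t ht).continuousWithinAt)
  have hconst : ∀ t ∈ Icc a b, h t = h a := by
    apply constant_of_has_deriv_right_zero hcont
    intro x hx
    exact (hder x ⟨hx.1, le_of_lt hx.2⟩).mono_of_mem_nhdsWithin (Icc_mem_nhdsGE_of_mem hx)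
  have hha : h a = 0 := by
    have hJP : J a ∈ P := hJ.2.2.1
    have hKP : K a ∈ P := hK.2.2.1
    have hJo : ∀ p ∈ P, g (J' a + S (J a)) p = 0 := hJ.2.2.2
    have hKo : ∀ p ∈ P, g (K' a + S (K a)) p = 0 := hK.2.2.2
    have e1 : g (J' a) (K a) = - g (S (J a)) (K a) := by
      have := hJo (K a) hKP
      rw [map_add, LinearMap.add_apply] at this
      linarith
    have e2 : g (K' a) (J a) = - g (S (K a)) (J a) := by
      have := hKo (J a) hJP
      rw [map_add, LinearMap.add_apply] at this
      linarith
    have e3 : g (S (J a)) (K a) = g (S (K a)) (J a) := by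
      rw [hSsymm (J a) hJP (K a) hKP, hgsymm]
    show B (J' a) (K a) - B (J a) (K' a) = 0
    simp only [hB]
    rw [e1, hgsymm (J a) (K' a), e2, e3]
    ring
  intro t ht
  have := hconst t ht
  rw [hha] at this
  rw [show h t = B (J' t) (K t) - B (J t) (K' t) from rfl] at this
  simp only [hB] at this
  linarith

lemma exists_solData {n : ℕ} (g : (Fin n → ℝ) →ₗ[ℝ] (Fin n → ℝ) →ₗ[ℝ] ℝ)
    (R : ℝ → (Fin n → ℝ) →L[ℝ] (Fin n → ℝ))
    (P : Submodule ℝ (Fin n → ℝ)) (S : (Fin n → ℝ) →ₗ[ℝ] (Fin n → ℝ))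
    {a b : ℝ} (hab : a < b) :
    ∃ D : Submodule ℝ ((Fin n → ℝ) × (Fin n → ℝ)),
      ∀ d, (d ∈ D ↔ ∃ J, IsPSSolution g R P S a b J ∧
        (J a, derivWithin J (Icc a b) a) = d) := by
  have hUD : UniqueDiffOn ℝ (Icc a b) := uniqueDiffOn_Icc hab
  have haI : a ∈ Icc a b := ⟨le_rfl, hab.le⟩
  refine ⟨{
    carrier := {d | ∃ J, IsPSSolution g R P S a b J ∧
      (J a, derivWithin J (Icc a b) a) = d}
    add_mem' := ?_
    zero_mem' := ?_
    smul_mem' := ?_ }, fun d => Iff.rfl⟩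
  · rintro x y ⟨J, hJ, rfl⟩ ⟨K, hK, rfl⟩
    have hF : ∀ i : Fin 2, IsPSSolution g R P S a b (![J, K] i) := by
      intro i; fin_cases i <;> simpa
    obtain ⟨hsol, hder⟩ := comb_sol hab hF (fun _ => (1:ℝ))
    refine ⟨_, hsol, ?_⟩
    have h1 : (fun t => ∑ i : Fin 2, (1:ℝ) • ![J, K] i t) a = J a + K a := by
      simp [Fin.sum_univ_two]
    have h2 : derivWithin (fun t => ∑ i : Fin 2, (1:ℝ) • ![J, K] i t) (Icc a b) a
        = derivWithin J (Icc a b) a + derivWithin K (Icc a b) a := by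
      rw [hder a haI]; simp [Fin.sum_univ_two]
    rw [Prod.mk.injEq]
    exact ⟨h1, h2⟩
  · have hF : ∀ i : Fin 0, IsPSSolution g R P S a b ((fun i => i.elim0 : Fin 0 → ℝ → Fin n → ℝ) i) :=
      fun i => i.elim0
    obtain ⟨hsol, hder⟩ := comb_sol hab hF (fun _ => (1:ℝ))
    refine ⟨_, hsol, ?_⟩
    have h1 : (fun t => ∑ i : Fin 0, (1:ℝ) • (fun i => i.elim0 : Fin 0 → ℝ → Fin n → ℝ) i t) a = 0 := by simp
    have h2 : derivWithin (fun t => ∑ i : Fin 0, (1:ℝ) • (fun i => i.elim0 : Fin 0 → ℝ → Fin n → ℝ) i t) (Icc a b) a = 0 := by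
      rw [hder a haI]; simp
    rw [Prod.mk.injEq]
    exact ⟨h1, h2⟩
  · rintro r x ⟨J, hJ, rfl⟩
    have hF : ∀ i : Fin 1, IsPSSolution g R P S a b (![J] i) := by
      intro i; fin_cases i; simpa
    obtain ⟨hsol, hder⟩ := comb_sol hab hF (fun _ => r)
    refine ⟨_, hsol, ?_⟩
    have h1 : (fun t => ∑ i : Fin 1, r • ![J] i t) a = r • J a := by simp
    have h2 : derivWithin (fun t => ∑ i : Fin 1, r • ![J] i t) (Icc a b) a
        = r • derivWithin J (Icc a b) a := by
      rw [hder a haI]; simp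
    rw [Prod.mk.injEq]
    exact ⟨h1, h2⟩

set_option maxHeartbeats 2000000 in
/-- If `g` is positive definite, the set of (P,S)-focal instants in `(a,b]` is finite. -/
theorem focal_instants_finite_of_posDef {n : ℕ}
    (g : (Fin n → ℝ) →ₗ[ℝ] (Fin n → ℝ) →ₗ[ℝ] ℝ)
    (R : ℝ → (Fin n → ℝ) →L[ℝ] (Fin n → ℝ))
    (P : Submodule ℝ (Fin n → ℝ)) (S : (Fin n → ℝ) →ₗ[ℝ] (Fin n → ℝ))
    (a b : ℝ) (hab : a < b)
    (hgsymm : ∀ x y, g x y = g y x)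
    (hgnd : ∀ x, (∀ y, g x y = 0) → x = 0)
    (hRcont : ContinuousOn R (Icc a b))
    (hRsymm : ∀ t ∈ Icc a b, ∀ x y, g (R t x) y = g x (R t y))
    (hPnd : ∀ x ∈ P, (∀ y ∈ P, g x y = 0) → x = 0)
    (hSP : ∀ x ∈ P, S x ∈ P)
    (hSsymm : ∀ x ∈ P, ∀ y ∈ P, g (S x) y = g x (S y))
    (hgpos : ∀ x : Fin n → ℝ, x ≠ 0 → 0 < g x x) :
    {t : ℝ | t ∈ Ioc a b ∧ IsFocal g R P S a b t}.Finite := by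
  classical
  have hUD : UniqueDiffOn ℝ (Icc a b) := uniqueDiffOn_Icc hab
  have haI : a ∈ Icc a b := ⟨le_rfl, hab.le⟩
  have suniq : ∀ J K : ℝ → Fin n → ℝ, IsPSSolution g R P S a b J →
      IsPSSolution g R P S a b K → ∀ t₀ ∈ Icc a b, J t₀ = K t₀ →
      derivWithin J (Icc a b) t₀ = derivWithin K (Icc a b) t₀ →
      ∀ t ∈ Icc a b, J t = K t := by
    intro J K hJ hK t₀ ht₀ h0 h1
    obtain ⟨c1, c2, c3, c4⟩ := sol_hyps hab hJ
    obtain ⟨d1, d2, d3, d4⟩ := sol_hyps hab hK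
    exact ode_uniq R hab.le hRcont c1 c2 c3 c4 d1 d2 d3 d4 ht₀ h0 h1
  obtain ⟨D, hD⟩ := exists_solData g R P S hab
  set m := Module.finrank ℝ D with hm
  set bas : Module.Basis (Fin m) ℝ D := Module.finBasis ℝ D with hbas
  have hKex : ∀ i : Fin m, ∃ J, IsPSSolution g R P S a b J ∧
      (J a, derivWithin J (Icc a b) a) = (bas i : (Fin n → ℝ) × (Fin n → ℝ)) :=
    fun i => (hD _).mp (bas i).2
  choose K hKsol hKdata using hKex
  set Jc : (Fin m → ℝ) → ℝ → Fin n → ℝ := fun c t => ∑ i, c i • K i t with hJcdef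
  have hJcsol : ∀ c, IsPSSolution g R P S a b (Jc c) := fun c => (comb_sol hab hKsol c).1
  have hJcder : ∀ c, ∀ t ∈ Icc a b, derivWithin (Jc c) (Icc a b) t
      = ∑ i, c i • derivWithin (K i) (Icc a b) t := fun c => (comb_sol hab hKsol c).2
  have hJc0 : ∀ t, Jc 0 t = 0 := by intro t; simp [hJcdef]
  have hJcadd : ∀ c d t, Jc (c + d) t = Jc c t + Jc d t := by
    intro c d t; simp [hJcdef, add_smul, Finset.sum_add_distrib]
  have hJcsmul : ∀ (r : ℝ) c t, Jc (r • c) t = r • Jc c t := by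
    intro r c t; simp [hJcdef, Finset.smul_sum, smul_smul]
  have hJcdata : ∀ c : Fin m → ℝ, (Jc c a, derivWithin (Jc c) (Icc a b) a)
      = ((∑ i, c i • bas i : D) : (Fin n → ℝ) × (Fin n → ℝ)) := by
    intro c
    have hcoe : ((∑ i, c i • bas i : D) : (Fin n → ℝ) × (Fin n → ℝ))
        = ∑ i, c i • (bas i : (Fin n → ℝ) × (Fin n → ℝ)) := by
      push_cast
      rfl
    rw [hcoe]
    have h1 : Jc c a = ∑ i, c i • (bas i : (Fin n → ℝ) × (Fin n → ℝ)).1 := by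
      simp only [hJcdef]
      exact Finset.sum_congr rfl (fun i _ => by rw [← hKdata i])
    have h2 : derivWithin (Jc c) (Icc a b) a
        = ∑ i, c i • (bas i : (Fin n → ℝ) × (Fin n → ℝ)).2 := by
      rw [hJcder c a haI]
      exact Finset.sum_congr rfl (fun i _ => by rw [← hKdata i])
    rw [Prod.mk.injEq]
    constructor
    · rw [h1, Prod.fst_sum]
      exact Finset.sum_congr rfl (fun i _ => rfl)
    · rw [h2, Prod.snd_sum]
      exact Finset.sum_congr rfl (fun i _ => rfl)
  have hrep : ∀ J, IsPSSolution g R P S a b J → ∃ c : Fin m → ℝ,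
      ∀ t ∈ Icc a b, J t = Jc c t := by
    intro J hJ
    have hmem : (J a, derivWithin J (Icc a b) a) ∈ D := (hD _).mpr ⟨J, hJ, rfl⟩
    set d : D := ⟨_, hmem⟩ with hd
    refine ⟨fun i => bas.repr d i, ?_⟩
    have hdata := hJcdata (fun i => bas.repr d i)
    rw [bas.sum_repr d] at hdata
    exact suniq J (Jc (fun i => bas.repr d i)) hJ (hJcsol _) a haI
      (congrArg Prod.fst hdata).symm (congrArg Prod.snd hdata).symm
  have hJcinj : ∀ c : Fin m → ℝ, (∀ t ∈ Icc a b, Jc c t = 0) → c = 0 := by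
    intro c hc
    have h1 : Jc c a = 0 := hc a haI
    have h2 : derivWithin (Jc c) (Icc a b) a = 0 := by
      have heq : derivWithin (Jc c) (Icc a b) a
          = derivWithin (fun _ => (0 : Fin n → ℝ)) (Icc a b) a :=
        derivWithin_congr (fun τ hτ => hc τ hτ) h1
      rw [heq, (hasDerivWithinAt_const a (Icc a b) (0 : Fin n → ℝ)).derivWithin (hUD a haI)]
    have hdata := hJcdata c
    rw [h1, h2] at hdata
    have hzero : (∑ i, c i • bas i : D) = 0 := by
      have hcoe : ((∑ i, c i • bas i : D) : (Fin n → ℝ) × (Fin n → ℝ))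
          = ((0 : D) : (Fin n → ℝ) × (Fin n → ℝ)) := by
        rw [← hdata]; simp
      exact Subtype.coe_injective hcoe
    have hli := Fintype.linearIndependent_iff.mp bas.linearIndependent c hzero
    funext i; exact hli i
  have hfocal : ∀ t ∈ Ioc a b, IsFocal g R P S a b t →
      ∃ c : Fin m → ℝ, c ≠ 0 ∧ Jc c t = 0 := by
    rintro t ht ⟨J, hJ, ⟨s, hs, hs0⟩, hJt⟩
    obtain ⟨c, hc⟩ := hrep J hJ
    refine ⟨c, ?_, ?_⟩
    · intro h0
      apply hs0
      rw [hc s hs, h0, hJc0]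
    · rw [← hc t ⟨ht.1.le, ht.2⟩]
      exact hJt
  have hgcont : Continuous (fun p : (Fin n → ℝ) × (Fin n → ℝ) => g p.1 p.2) := by
    exact Continuous.clm_apply ((gCLM g).continuous.comp continuous_fst) continuous_snd
  have hsumlim : ∀ (γ : ℕ → Fin m → ℝ) (γ' : Fin m → ℝ)
      (V : ℕ → Fin m → Fin n → ℝ) (V' : Fin m → Fin n → ℝ),
      Tendsto γ atTop (𝓝 γ') → (∀ i, Tendsto (fun j => V j i) atTop (𝓝 (V' i))) →
      Tendsto (fun j => ∑ i, γ j i • V j i) atTop (𝓝 (∑ i, γ' i • V' i)) := by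
    intro γ γ' V V' hγ hV
    exact tendsto_finset_sum _ (fun i _ => ((tendsto_pi_nhds.mp hγ) i).smul (hV i))
  -- The isolation lemma
  have hisol : ∀ t₀ ∈ Icc a b, ∃ δ > 0, ∀ t ∈ Icc a b, t ≠ t₀ → |t - t₀| < δ →
      ∀ c : Fin m → ℝ, Jc c t = 0 → c = 0 := by
    intro t₀ ht₀
    by_contra hcon
    push_neg at hcon
    have hseq : ∀ j : ℕ, ∃ t, t ∈ Icc a b ∧ t ≠ t₀ ∧ |t - t₀| < 1 / (j + 1) ∧
        ∃ c : Fin m → ℝ, ‖c‖ = 1 ∧ Jc c t = 0 := by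
      intro j
      obtain ⟨t, htI, htne, htd, c, hcz, hc0⟩ := hcon (1 / (j + 1)) (by positivity)
      refine ⟨t, htI, htne, htd, ‖c‖⁻¹ • c, ?_, ?_⟩
      · rw [norm_smul, norm_inv, norm_norm, inv_mul_cancel₀ (norm_ne_zero_iff.mpr hc0)]
      · rw [hJcsmul, hcz, smul_zero]
    choose T hTI hTne hTd cs hcs1 hcsz using hseq
    have hT0 : Tendsto T atTop (𝓝 t₀) := by
      rw [tendsto_iff_dist_tendsto_zero]
      apply squeeze_zero (fun j => dist_nonneg)
        (fun j => le_of_lt (by rw [Real.dist_eq]; exact hTd j))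
        tendsto_one_div_add_atTop_nhds_zero_nat
    obtain ⟨cinf, hcinfmem, φ, hφ, hcconv⟩ := (isCompact_sphere (0 : Fin m → ℝ) 1).tendsto_subseq
      (fun j => mem_sphere_zero_iff_norm.mpr (hcs1 j))
    have hsφ : Tendsto (fun j => T (φ j)) atTop (𝓝[Icc a b \ {t₀}] t₀) := by
      rw [tendsto_nhdsWithin_iff]
      exact ⟨hT0.comp hφ.tendsto_atTop,
        Eventually.of_forall (fun j => ⟨hTI (φ j), hTne (φ j)⟩)⟩
    have hKfacts := fun i => sol_hyps hab (hKsol i)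
    have hKslope : ∀ i, Tendsto (fun j => slope (K i) t₀ (T (φ j))) atTop
        (𝓝 (derivWithin (K i) (Icc a b) t₀)) := fun i =>
      (hasDerivWithinAt_iff_tendsto_slope.mp ((hKfacts i).2.2.1 t₀ ht₀)).comp hsφ
    have hsφ' : Tendsto (fun j => T (φ j)) atTop (𝓝[Icc a b] t₀) :=
      hsφ.mono_right (nhdsWithin_mono _ diff_subset)
    have hKcont : ∀ i, Tendsto (fun j => K i (T (φ j))) atTop (𝓝 (K i t₀)) := fun i =>
      ((hKfacts i).1 t₀ ht₀).tendsto.comp hsφ'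
    set Tlin : (Fin m → ℝ) →ₗ[ℝ] (Fin n → ℝ) :=
      { toFun := fun c => Jc c t₀
        map_add' := fun c d => hJcadd c d t₀
        map_smul' := fun r c => hJcsmul r c t₀ } with hTlin
    set W := LinearMap.ker Tlin with hW
    obtain ⟨U, hUc⟩ := Submodule.exists_isCompl W
    set pw : (Fin m → ℝ) →ₗ[ℝ] (Fin m → ℝ) := W.subtype.comp (W.linearProjOfIsCompl U hUc)
      with hpw
    set pu : (Fin m → ℝ) →ₗ[ℝ] (Fin m → ℝ) :=
      U.subtype.comp (U.linearProjOfIsCompl W hUc.symm) with hpu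
    have hpwu : ∀ x, pw x + pu x = x := fun x =>
      Submodule.projection_add_projection_eq_self hUc x
    have hpwW : ∀ x, pw x ∈ W := fun x => SetLike.coe_mem _
    have hcφ : Tendsto (fun j => cs (φ j)) atTop (𝓝 cinf) := hcconv
    have hwlim : Tendsto (fun j => pw (cs (φ j))) atTop (𝓝 (pw cinf)) :=
      (pw.continuous_of_finiteDimensional.tendsto cinf).comp hcφ
    have hulim : Tendsto (fun j => pu (cs (φ j))) atTop (𝓝 (pu cinf)) :=
      (pu.continuous_of_finiteDimensional.tendsto cinf).comp hcφ
    -- cinf ∈ W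
    have hcinf0 : Jc cinf t₀ = 0 := by
      have h1 : Tendsto (fun j => Jc (cs (φ j)) (T (φ j))) atTop (𝓝 (Jc cinf t₀)) := by
        have := hsumlim (fun j => cs (φ j)) cinf (fun j i => K i (T (φ j)))
          (fun i => K i t₀) hcφ hKcont
        exact this
      have h2 : Tendsto (fun j => Jc (cs (φ j)) (T (φ j))) atTop (𝓝 0) := by
        have heq : (fun j => Jc (cs (φ j)) (T (φ j))) = fun _ => 0 :=
          funext (fun j => hcsz (φ j))
        rw [heq]; exact tendsto_const_nhds
      exact tendsto_nhds_unique h1 h2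
    have hcinfW : cinf ∈ W := by
      rw [hW, LinearMap.mem_ker]
      exact hcinf0
    have hucinf : pu cinf = 0 := by
      have := Submodule.linearProjOfIsCompl_apply_right hUc.symm ⟨cinf, hcinfW⟩
      rw [hpu]
      simp only [LinearMap.comp_apply]
      rw [show ((⟨cinf, hcinfW⟩ : W) : Fin m → ℝ) = cinf from rfl] at this
      erw [this]
      rfl
    have hwcinf : pw cinf = cinf := by
      have := hpwu cinf
      rw [hucinf, add_zero] at this
      exact this
    set z : Fin n → ℝ := ∑ i, cinf i • derivWithin (K i) (Icc a b) t₀ with hz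
    -- slope decomposition
    have hslopeJc : ∀ (cc : Fin m → ℝ) (s : ℝ),
        slope (Jc cc) t₀ s = ∑ i, cc i • slope (K i) t₀ s := by
      intro cc s
      simp only [slope, vsub_eq_sub, hJcdef]
      rw [← Finset.sum_sub_distrib, Finset.smul_sum]
      exact Finset.sum_congr rfl (fun i _ => by rw [← smul_sub, smul_comm])
    -- limits of slopes
    have hslw : Tendsto (fun j => ∑ i, pw (cs (φ j)) i • slope (K i) t₀ (T (φ j)))
        atTop (𝓝 z) := by
      have := hsumlim (fun j => pw (cs (φ j))) cinf
        (fun j i => slope (K i) t₀ (T (φ j)))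
        (fun i => derivWithin (K i) (Icc a b) t₀) (by rw [← hwcinf]; exact hwlim) hKslope
      exact this
    have hslu : Tendsto (fun j => ∑ i, pu (cs (φ j)) i • slope (K i) t₀ (T (φ j)))
        atTop (𝓝 0) := by
      have := hsumlim (fun j => pu (cs (φ j))) 0
        (fun j i => slope (K i) t₀ (T (φ j)))
        (fun i => derivWithin (K i) (Icc a b) t₀) (by rw [← hucinf]; exact hulim) hKslope
      simpa using this
    have hzlim : Tendsto (fun j => ∑ i, pw (cs (φ j)) i • derivWithin (K i) (Icc a b) t₀)
        atTop (𝓝 z) := by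
      have := hsumlim (fun j => pw (cs (φ j))) cinf
        (fun _ i => derivWithin (K i) (Icc a b) t₀)
        (fun i => derivWithin (K i) (Icc a b) t₀) (by rw [← hwcinf]; exact hwlim)
        (fun i => tendsto_const_nhds)
      exact this
    -- the scalar equation
    have hkey : ∀ j, g (slope (Jc (pw (cs (φ j)))) t₀ (T (φ j)))
          (∑ i, pw (cs (φ j)) i • derivWithin (K i) (Icc a b) t₀)
        + g (slope (Jc (pu (cs (φ j)))) t₀ (T (φ j)))
          (∑ i, pw (cs (φ j)) i • derivWithin (K i) (Icc a b) t₀) = 0 := by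
      intro j
      set w := pw (cs (φ j)) with hwdef
      set u := pu (cs (φ j)) with hudef
      set s := T (φ j) with hsdef
      set zj := ∑ i, w i • derivWithin (K i) (Icc a b) t₀ with hzjdef
      have hw0 : Jc w t₀ = 0 := hpwW (cs (φ j))
      have hsum0 : Jc w s + Jc u s = 0 := by
        rw [← hJcadd, hpwu]
        exact hcsz (φ j)
      have hzjd : zj = derivWithin (Jc w) (Icc a b) t₀ := (hJcder w t₀ ht₀).symm
      -- Lagrangian: g (Jc u t₀) zj = 0
      have hlag : g (Jc u t₀) zj = 0 := by
        rw [hgsymm, hzjd]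
        rw [lagrange hab hgsymm hRsymm hSsymm (hJcsol w) (hJcsol u) t₀ ht₀]
        rw [hw0]
        simp
      have hveq : slope (Jc w) t₀ s + slope (Jc u) t₀ s
          = (s - t₀)⁻¹ • (-(Jc u t₀)) := by
        simp only [slope, vsub_eq_sub]
        rw [← smul_add, hw0, sub_zero]
        congr 1
        have : Jc w s = -(Jc u s) := by
          rw [eq_neg_iff_add_eq_zero]
          exact hsum0
        rw [this]
        abel
      have := congrArg (fun x => g x zj) hveq
      simp only [map_add, LinearMap.add_apply] at this
      rw [map_smul, LinearMap.smul_apply, map_neg, LinearMap.neg_apply, hlag] at this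
      simpa using this
    -- take the limit
    have hglim : Tendsto (fun j => g (slope (Jc (pw (cs (φ j)))) t₀ (T (φ j)))
          (∑ i, pw (cs (φ j)) i • derivWithin (K i) (Icc a b) t₀)
        + g (slope (Jc (pu (cs (φ j)))) t₀ (T (φ j)))
          (∑ i, pw (cs (φ j)) i • derivWithin (K i) (Icc a b) t₀))
        atTop (𝓝 (g z z + g 0 z)) := by
      have h1 : Tendsto (fun j => g (slope (Jc (pw (cs (φ j)))) t₀ (T (φ j)))
          (∑ i, pw (cs (φ j)) i • derivWithin (K i) (Icc a b) t₀)) atTop (𝓝 (g z z)) := by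
        have hp : Tendsto (fun j => (slope (Jc (pw (cs (φ j)))) t₀ (T (φ j)),
            ∑ i, pw (cs (φ j)) i • derivWithin (K i) (Icc a b) t₀)) atTop (𝓝 (z, z)) := by
          apply Tendsto.prodMk_nhds
          · have heq : (fun j => slope (Jc (pw (cs (φ j)))) t₀ (T (φ j)))
                = fun j => ∑ i, pw (cs (φ j)) i • slope (K i) t₀ (T (φ j)) :=
              funext (fun j => hslopeJc _ _)
            rw [heq]; exact hslw
          · exact hzlim
        exact (hgcont.tendsto (z, z)).comp hp
      have h2 : Tendsto (fun j => g (slope (Jc (pu (cs (φ j)))) t₀ (T (φ j)))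
          (∑ i, pw (cs (φ j)) i • derivWithin (K i) (Icc a b) t₀)) atTop (𝓝 (g 0 z)) := by
        have hp : Tendsto (fun j => (slope (Jc (pu (cs (φ j)))) t₀ (T (φ j)),
            ∑ i, pw (cs (φ j)) i • derivWithin (K i) (Icc a b) t₀)) atTop
            (𝓝 ((0 : Fin n → ℝ), z)) := by
          apply Tendsto.prodMk_nhds
          · have heq : (fun j => slope (Jc (pu (cs (φ j)))) t₀ (T (φ j)))
                = fun j => ∑ i, pu (cs (φ j)) i • slope (K i) t₀ (T (φ j)) :=
              funext (fun j => hslopeJc _ _)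
            rw [heq]; exact hslu
          · exact hzlim
        exact (hgcont.tendsto (0, z)).comp hp
      exact h1.add h2
    have hgzz : g z z + g 0 z = 0 := by
      have hconst : Tendsto (fun (_ : ℕ) => (0:ℝ)) atTop (𝓝 0) := tendsto_const_nhds
      have heq : (fun j => g (slope (Jc (pw (cs (φ j)))) t₀ (T (φ j)))
          (∑ i, pw (cs (φ j)) i • derivWithin (K i) (Icc a b) t₀)
        + g (slope (Jc (pu (cs (φ j)))) t₀ (T (φ j)))
          (∑ i, pw (cs (φ j)) i • derivWithin (K i) (Icc a b) t₀)) = fun _ => (0:ℝ) :=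
        funext hkey
      rw [heq] at hglim
      exact tendsto_nhds_unique hglim hconst
    have hg0z : g 0 z = 0 := by simp
    have hz0 : z = 0 := by
      by_contra hzne
      have := hgpos z hzne
      rw [hg0z, add_zero] at hgzz
      linarith
    -- conclude cinf = 0
    have hder0 : derivWithin (Jc cinf) (Icc a b) t₀ = 0 := by
      rw [hJcder cinf t₀ ht₀, ← hz, hz0]
    have hzero : ∀ t ∈ Icc a b, Jc cinf t = 0 := by
      intro t ht
      have := suniq (Jc cinf) (Jc 0) (hJcsol cinf) (hJcsol 0) t₀ ht₀
        (by rw [hcinf0, hJc0]) (by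
          rw [hder0, hJcder 0 t₀ ht₀]
          simp) t ht
      rw [this, hJc0]
    have : cinf = 0 := hJcinj cinf hzero
    rw [mem_sphere_zero_iff_norm, this, norm_zero] at hcinfmem
    exact one_ne_zero hcinfmem.symm
  -- conclude finiteness by compactness
  choose! δ hδpos hδ using hisol
  obtain ⟨s, hsub, hsfin, hcov⟩ := isCompact_Icc.elim_finite_subcover_image
    (fun (t₀ : ℝ) (_ : t₀ ∈ Icc a b) => Metric.isOpen_ball
      (x := t₀) (ε := δ t₀))
    (fun t ht => mem_iUnion₂.mpr ⟨t, ht, Metric.mem_ball_self (hδpos t ht)⟩)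
  apply hsfin.subset
  rintro t ⟨htI, htF⟩
  obtain ⟨c, hcne, hcz⟩ := hfocal t htI htF
  have htIcc : t ∈ Icc a b := ⟨htI.1.le, htI.2⟩
  obtain ⟨t₀, ht₀s, htball⟩ := mem_iUnion₂.mp (hcov htIcc)
  by_cases hne : t = t₀
  · rwa [hne]
  · exfalso
    apply hcne
    apply hδ t₀ (hsub ht₀s) t htIcc hne _ c hcz
    rw [← Real.dist_eq]
    exact Metric.mem_ball.mp htball
end

section
/- Let (V,ω) be a real symplectic space of dimension 2n. Then there exists a complex structure on V compatible with ω, i.e. a linear map 𝓘 : V → V with 𝓘 ∘ 𝓘 = −id_V such that the bilinear form (x,y) ↦ ω(𝓘x, y) is symmetric and positive definite on V. -/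
open Matrix

private lemma dot_helper {m : ℕ} (A : Matrix (Fin m) (Fin m) ℝ) (u w : Fin m → ℝ) :
    (A *ᵥ u) ⬝ᵥ w = u ⬝ᵥ (Aᵀ *ᵥ w) := by
  rw [dotProduct_mulVec, vecMul_transpose]

open scoped MatrixOrder in
private lemma aux_compatible_matrix {m : ℕ} (Ω : Matrix (Fin m) (Fin m) ℝ)
    (hT : Ωᵀ = -Ω) (hdet : IsUnit Ω.det) :
    ∃ J : Matrix (Fin m) (Fin m) ℝ, J * J = -1 ∧ (Jᵀ * Ω).PosDef := by
  classical
  have hCT : ∀ A : Matrix (Fin m) (Fin m) ℝ, Aᴴ = Aᵀ := fun A =>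
    conjTranspose_eq_transpose_of_trivial A
  have hpsd : (Ωᵀ * Ω).PosSemidef := by
    simpa [hCT] using posSemidef_conjTranspose_mul_self Ω
  set P : Matrix (Fin m) (Fin m) ℝ := CFC.sqrt (Ωᵀ * Ω) with hPdef
  have hPpsd : P.PosSemidef := LE.le.posSemidef (CFC.sqrt_nonneg _)
  have hP2 : P ^ 2 = Ωᵀ * Ω := CFC.sq_sqrt _ hpsd.nonneg
  have hPP : P * P = Ωᵀ * Ω := by rw [← hP2, pow_two]
  have hPT : Pᵀ = P := by rw [← hCT]; exact hPpsd.1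
  have hneg : Ωᵀ * Ω = -(Ω * Ω) := by rw [hT, neg_mul]
  have hdetΩ : Ω.det ≠ 0 := hdet.ne_zero
  have hdetP : IsUnit P.det := by
    have h2 : P.det ^ 2 = Ω.det ^ 2 := by
      have := congrArg Matrix.det hP2
      rwa [det_pow, det_mul, det_transpose, ← pow_two] at this
    refine isUnit_iff_ne_zero.2 fun h0 => hdetΩ ?_
    rw [h0] at h2
    have : Ω.det ^ 2 = 0 := by rw [← h2]; ring
    exact (pow_eq_zero_iff two_ne_zero).1 this
  have hΩinv : Ω * Ω⁻¹ = 1 := mul_nonsing_inv Ω hdet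
  have hΩinv' : Ω⁻¹ * Ω = 1 := nonsing_inv_mul Ω hdet
  have hPinv : P * P⁻¹ = 1 := mul_nonsing_inv P hdetP
  have hPinv' : P⁻¹ * P = 1 := nonsing_inv_mul P hdetP
  -- P commutes with Ω * Ω
  have hcomm2 : P * (Ω * Ω) = (Ω * Ω) * P := by
    have h : P * (P * P) = (P * P) * P := by noncomm_ring
    rw [hPP, hneg] at h
    simpa [mul_neg, neg_mul, neg_inj] using h
  -- the conjugated matrix C = Ω⁻¹ * P * Ω equals P
  set C : Matrix (Fin m) (Fin m) ℝ := Ω⁻¹ * P * Ω with hCdef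
  have hCΩ : C * Ω = Ω * P := by
    calc C * Ω = Ω⁻¹ * (P * (Ω * Ω)) := by rw [hCdef]; noncomm_ring
    _ = Ω⁻¹ * Ω * (Ω * P) := by rw [hcomm2]; noncomm_ring
    _ = Ω * P := by rw [hΩinv', one_mul]
  have hC' : C = Ω * P * Ω⁻¹ := by
    calc C = (C * Ω) * Ω⁻¹ := by rw [mul_assoc, hΩinv, mul_one]
    _ = Ω * P * Ω⁻¹ := by rw [hCΩ]
  have hninv : (-Ω)⁻¹ = -Ω⁻¹ := inv_eq_right_inv (by rw [neg_mul_neg, hΩinv])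
  have hCT2 : Cᵀ = C := by
    have h1 : Cᵀ = Ωᵀ * (Pᵀ * (Ω⁻¹)ᵀ) := by rw [hCdef, transpose_mul, transpose_mul]
    rw [h1, hPT, transpose_nonsing_inv, hT, hninv, hCdef]
    calc -Ω * (P * -Ω⁻¹) = Ω * P * Ω⁻¹ := by noncomm_ring
    _ = Ω⁻¹ * P * Ω := by rw [← hC', hCdef]
  have hP3 : (P * P * P).PosSemidef := by
    have h := hPpsd.mul_mul_conjTranspose_same P
    rwa [hCT, hPT] at h
  have hCpsd : C.PosSemidef := by
    refine PosSemidef.of_dotProduct_mulVec_nonneg ((hCT C).trans hCT2) fun x => ?_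
    obtain ⟨u, rfl⟩ : ∃ u, x = Ω *ᵥ u :=
      ⟨Ω⁻¹ *ᵥ x, by rw [mulVec_mulVec, hΩinv, one_mulVec]⟩
    have key : star (Ω *ᵥ u) ⬝ᵥ (C *ᵥ Ω *ᵥ u) = star u ⬝ᵥ ((P * P * P) *ᵥ u) := by
      simp only [star_trivial]
      rw [mulVec_mulVec, hCΩ, ← mulVec_mulVec, dot_helper, mulVec_mulVec, mulVec_mulVec,
        ← hPP]
    rw [key]
    exact hP3.dotProduct_mulVec_nonneg u
  have hC2 : C ^ 2 = Ωᵀ * Ω := by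
    have hmid : P * (Ω * Ω) * P = (Ω * Ω) * (P * P) := by
      rw [hcomm2]; noncomm_ring
    rw [pow_two]
    nth_rewrite 1 [hCdef]
    nth_rewrite 1 [hC']
    calc Ω⁻¹ * P * Ω * (Ω * P * Ω⁻¹) = Ω⁻¹ * (P * (Ω * Ω) * P) * Ω⁻¹ := by noncomm_ring
    _ = Ω⁻¹ * ((Ω * Ω) * (P * P)) * Ω⁻¹ := by rw [hmid]
    _ = (Ω⁻¹ * Ω) * (Ω * (Ωᵀ * Ω) * Ω⁻¹) := by rw [hPP]; noncomm_ring
    _ = Ω * Ωᵀ * (Ω * Ω⁻¹) := by rw [hΩinv', one_mul]; noncomm_ring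
    _ = Ω * Ωᵀ := by rw [hΩinv, mul_one]
    _ = Ωᵀ * Ω := by rw [hT]; simp [Matrix.neg_mul, Matrix.mul_neg]
  have hCP : C = P := ((CFC.sqrt_eq_iff _ _ hpsd.nonneg hCpsd.nonneg).2 (by rw [← pow_two, hC2])).symm
  have hPΩ : P * Ω = Ω * P := by rw [← hCΩ, hCP]
  -- J := Ω * P⁻¹
  have hcomminv : P⁻¹ * Ω = Ω * P⁻¹ := by
    calc P⁻¹ * Ω = P⁻¹ * Ω * (P * P⁻¹) := by rw [hPinv, mul_one]
    _ = P⁻¹ * (Ω * P) * P⁻¹ := by noncomm_ring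
    _ = P⁻¹ * (P * Ω) * P⁻¹ := by rw [← hPΩ]
    _ = (P⁻¹ * P) * (Ω * P⁻¹) := by noncomm_ring
    _ = Ω * P⁻¹ := by rw [hPinv', one_mul]
  have hΩΩ : Ω * Ω = -(P * P) := by rw [hPP, hneg, neg_neg]
  refine ⟨Ω * P⁻¹, ?_, ?_⟩
  · calc Ω * P⁻¹ * (Ω * P⁻¹) = Ω * (P⁻¹ * Ω) * P⁻¹ := by noncomm_ring
    _ = Ω * (Ω * P⁻¹) * P⁻¹ := by rw [hcomminv]
    _ = (Ω * Ω) * (P⁻¹ * P⁻¹) := by noncomm_ring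
    _ = -(P * (P * P⁻¹) * P⁻¹) := by rw [hΩΩ]; noncomm_ring
    _ = -1 := by rw [hPinv, mul_one, hPinv]
  · have hJT : (Ω * P⁻¹)ᵀ * Ω = P := by
      rw [transpose_mul, transpose_nonsing_inv, hPT, hT]
      calc P⁻¹ * (-Ω) * Ω = -(P⁻¹ * (Ω * Ω)) := by noncomm_ring
      _ = -(P⁻¹ * (-(P * P))) := by rw [hΩΩ]
      _ = (P⁻¹ * P) * P := by noncomm_ring
      _ = P := by rw [hPinv', one_mul]
    rw [hJT]
    refine PosDef.of_dotProduct_mulVec_pos hPpsd.1 fun x hx => ?_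
    refine (hPpsd.dotProduct_mulVec_nonneg x).lt_of_ne fun h0 => ?_
    have hz : P *ᵥ x = 0 := (hPpsd.dotProduct_mulVec_zero_iff x).1 h0.symm
    apply hx
    have : P⁻¹ *ᵥ (P *ᵥ x) = x := by rw [mulVec_mulVec, hPinv', one_mulVec]
    rw [hz, mulVec_zero] at this
    exact this.symm

/-- Every symplectic space `(V,ω)` of dimension `2n` admits a compatible complex structure:
a linear map `𝓘 : V → V` with `𝓘 ∘ 𝓘 = -id` such that `ω(𝓘·,·)` is symmetric and positive
definite. -/
theorem exists_compatible_complex_structure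
    {V : Type*} [AddCommGroup V] [Module ℝ V] [FiniteDimensional ℝ V]
    {n : ℕ} (hV : Module.finrank ℝ V = 2 * n)
    (ω : V →ₗ[ℝ] V →ₗ[ℝ] ℝ)
    (halt : ∀ x, ω x x = 0)
    (hnd : ∀ x, (∀ y, ω x y = 0) → x = 0) :
    ∃ I : V →ₗ[ℝ] V,
      I ∘ₗ I = -LinearMap.id ∧
      (∀ x y : V, ω (I x) y = ω (I y) x) ∧
      (∀ x : V, x ≠ 0 → 0 < ω (I x) x) := by
  classical
  have hskew : ∀ x y, ω x y = -ω y x := by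
    intro x y
    have h := halt (x + y)
    simp only [map_add, LinearMap.add_apply, halt] at h
    linarith
  set m := Module.finrank ℝ V with hm
  let b : Module.Basis (Fin m) ℝ V := Module.finBasis ℝ V
  let e : V ≃ₗ[ℝ] (Fin m → ℝ) := b.equivFun
  set Ω : Matrix (Fin m) (Fin m) ℝ := Matrix.of (fun i j => ω (b i) (b j)) with hΩdef
  have expand : ∀ (f : V →ₗ[ℝ] ℝ) (y : V), f y = ∑ j, e y j * f (b j) := by
    intro f y
    conv_lhs => rw [← e.symm_apply_apply y]
    rw [show e.symm (e y) = ∑ j, e y j • b j from b.equivFun_symm_apply _, map_sum]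
    exact Finset.sum_congr rfl fun j _ => by rw [_root_.map_smul, smul_eq_mul]
  have key : ∀ x y : V, ω x y = (e x) ⬝ᵥ (Ω *ᵥ (e y)) := by
    intro x y
    have h1 : ω x y = ∑ i, e x i * ω (b i) y := by
      conv_lhs => rw [← e.symm_apply_apply x]
      rw [show e.symm (e x) = ∑ i, e x i • b i from b.equivFun_symm_apply _, map_sum,
        LinearMap.sum_apply]
      exact Finset.sum_congr rfl fun i _ => by
        rw [_root_.map_smul, LinearMap.smul_apply, smul_eq_mul]
    rw [h1]
    show _ = ∑ i, e x i * ∑ j, Ω i j * e y j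
    refine Finset.sum_congr rfl fun i _ => ?_
    rw [expand (ω (b i)) y, Finset.mul_sum, Finset.mul_sum]
    refine Finset.sum_congr rfl fun j _ => ?_
    show e x i * (e y j * ω (b i) (b j)) = e x i * (ω (b i) (b j) * e y j)
    ring
  have hΩT : Ωᵀ = -Ω := by
    ext i j
    show ω (b j) (b i) = -ω (b i) (b j)
    exact hskew _ _
  have hdet : IsUnit Ω.det := by
    rw [isUnit_iff_ne_zero]
    intro h0
    obtain ⟨v, hv, hv0⟩ := Matrix.exists_mulVec_eq_zero_iff.2 h0
    apply hv
    have hx : e.symm v = 0 := by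
      apply hnd
      intro y
      rw [hskew, key y (e.symm v), e.apply_symm_apply, hv0]
      simp
    have := congrArg e hx
    rwa [e.apply_symm_apply, map_zero] at this
  obtain ⟨J, hJJ, hJpd⟩ := aux_compatible_matrix Ω hΩT hdet
  have hST : (Jᵀ * Ω)ᵀ = Jᵀ * Ω := by
    rw [← conjTranspose_eq_transpose_of_trivial]
    exact hJpd.1
  refine ⟨e.symm.toLinearMap ∘ₗ (Matrix.mulVecLin J) ∘ₗ e.toLinearMap, ?_, ?_, ?_⟩
  · apply LinearMap.ext
    intro x
    simp only [LinearMap.comp_apply, LinearMap.neg_apply, LinearMap.id_apply,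
      LinearEquiv.coe_coe, Matrix.mulVecLin_apply, e.apply_symm_apply]
    rw [mulVec_mulVec, hJJ]
    rw [show (-1 : Matrix (Fin m) (Fin m) ℝ) *ᵥ (e x) = -(e x) from by
      rw [neg_mulVec, one_mulVec]]
    rw [map_neg, e.symm_apply_apply]
  · intro x y
    rw [key, key]
    simp only [LinearMap.comp_apply, LinearEquiv.coe_coe, Matrix.mulVecLin_apply,
      e.apply_symm_apply]
    rw [dot_helper, dot_helper, mulVec_mulVec, mulVec_mulVec]
    calc (e x) ⬝ᵥ ((Jᵀ * Ω) *ᵥ e y) = ((Jᵀ * Ω) *ᵥ e y) ⬝ᵥ (e x) := dotProduct_comm _ _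
    _ = e y ⬝ᵥ ((Jᵀ * Ω)ᵀ *ᵥ e x) := dot_helper _ _ _
    _ = e y ⬝ᵥ ((Jᵀ * Ω) *ᵥ e x) := by rw [hST]
  · intro x hx
    rw [key]
    simp only [LinearMap.comp_apply, LinearEquiv.coe_coe, Matrix.mulVecLin_apply,
      e.apply_symm_apply]
    rw [dot_helper, mulVec_mulVec]
    have hu : e x ≠ 0 := fun h => hx (by simpa using congrArg e.symm h)
    have h := hJpd.dotProduct_mulVec_pos hu
    simpa [star_trivial] using h
end
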